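/- arXiv:2306.10519 — 6 statements merged into one kernel-verified Lean document; each statement's English description precedes it below -/
import Mathlib

section
/- Let n ≥ 1 and let f be a polynomial in two complex variables, viewed as an element of (ℂ[x])[y], which is monic in y of degree n. Then for every p ∈ ℂ with p ∉ X_f there exist an open set U ⊆ ℂ with p ∈ U and U ∩ X_f = ∅, and a homeomorphism Φ from {(x,y) ∈ ℂ × ℂ : x ∈ U and F(x,y) ≠ 0} onto U × {y ∈ ℂ : F(p,y) ≠ 0} such that the first component of Φ(x,y) equals x for every point (x,y) of the domain. (Local triviality of the first projection restricted to the complement of the curve over the complement of the critical values.) -/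
open Polynomial
open scoped NNReal

/-- Evaluation of `f ∈ (ℂ[x])[y]` at the point `(x, y)`. -/
noncomputable def curveEval (f : Polynomial (Polynomial ℂ)) (x y : ℂ) : ℂ :=
  Polynomial.eval y (Polynomial.map (Polynomial.evalRingHom x) f)

/-- Evaluation of the `y`-derivative of `f` at the point `(x, y)`. -/
noncomputable def curveEvalDy (f : Polynomial (Polynomial ℂ)) (x y : ℂ) : ℂ :=
  curveEval f.derivative x y

/-- The critical-value set of the first projection restricted to the curve `{f = 0}`. -/
noncomputable def critValues (f : Polynomial (Polynomial ℂ)) : Set ℂ :=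
  {x : ℂ | ∃ y : ℂ, curveEval f x y = 0 ∧ curveEvalDy f x y = 0}

private lemma contDiff_evalPoly (q : Polynomial ℂ) : ContDiff ℂ ⊤ fun x : ℂ => q.eval x := by
  induction q using Polynomial.induction_on' with
  | add p q hp hq => simpa using hp.add hq
  | monomial n a => simpa [Polynomial.eval_monomial] using contDiff_const.mul (contDiff_id.pow n)

private lemma curveEval_eq_sum (f : Polynomial (Polynomial ℂ)) (z : ℂ × ℂ) :
    curveEval f z.1 z.2 = ∑ i ∈ f.support, (f.coeff i).eval z.1 * z.2 ^ i := by
  rw [curveEval, Polynomial.eval_map, Polynomial.eval₂_eq_sum, Polynomial.sum_def]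
  rfl

private lemma contDiff_curveEval (f : Polynomial (Polynomial ℂ)) :
    ContDiff ℂ ⊤ fun z : ℂ × ℂ => curveEval f z.1 z.2 := by
  have : (fun z : ℂ × ℂ => curveEval f z.1 z.2)
      = fun z : ℂ × ℂ => ∑ i ∈ f.support, (f.coeff i).eval z.1 * z.2 ^ i :=
    funext (curveEval_eq_sum f)
  rw [this]
  exact ContDiff.sum fun i _ =>
    ((contDiff_evalPoly (f.coeff i)).comp contDiff_fst).mul (contDiff_snd.pow i)

private lemma hasDerivAt_curveEval (f : Polynomial (Polynomial ℂ)) (x y : ℂ) :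
    HasDerivAt (fun t => curveEval f x t) (curveEvalDy f x y) y := by
  have h := Polynomial.hasDerivAt (f.map (Polynomial.evalRingHom x)) y
  have : curveEvalDy f x y = ((f.map (Polynomial.evalRingHom x)).derivative).eval y := by
    rw [curveEvalDy, curveEval, Polynomial.derivative_map]
  rw [this]
  exact h

/-- the shear `(u,v) ↦ (u, A u + B v)` as a continuous linear equiv, for `B ≠ 0`. -/
noncomputable def shearEquiv (A B : ℂ) (hB : B ≠ 0) : (ℂ × ℂ) ≃L[ℂ] (ℂ × ℂ) :=
  LinearEquiv.toContinuousLinearEquiv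
    { toFun := fun z => (z.1, A * z.1 + B * z.2)
      invFun := fun w => (w.1, (w.2 - A * w.1) / B)
      map_add' := by intro a b; ext <;> simp <;> ring
      map_smul' := by intro c a; ext <;> simp <;> ring
      left_inv := by intro z; ext <;> field_simp <;> ring
      right_inv := by intro w; ext <;> field_simp <;> ring }

lemma shearEquiv_apply (A B : ℂ) (hB : B ≠ 0) (z : ℂ × ℂ) :
    shearEquiv A B hB z = (z.1, A * z.1 + B * z.2) := rfl

private lemma localRootData (f : Polynomial (Polynomial ℂ)) (x₀ y₀ : ℂ)
    (h0 : curveEval f x₀ y₀ = 0) (h1 : curveEvalDy f x₀ y₀ ≠ 0) :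
    ∃ (O : Set ℂ) (ψ : ℂ → ℂ),
      IsOpen O ∧ x₀ ∈ O ∧ ContinuousOn ψ O ∧ ψ x₀ = y₀ ∧
      (∀ x ∈ O, curveEval f x (ψ x) = 0) ∧
      ∃ η > 0, (∀ x ∈ O, ∀ y : ℂ, dist y y₀ < η → curveEval f x y = 0 → y = ψ x) := by
  set Ff : ℂ × ℂ → ℂ := fun z => curveEval f z.1 z.2 with hFf
  have hstrict : HasStrictFDerivAt Ff (fderiv ℂ Ff (x₀, y₀)) (x₀, y₀) :=
    (contDiff_curveEval f).contDiffAt.hasStrictFDerivAt (by simp)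
  set L := fderiv ℂ Ff (x₀, y₀) with hLdef
  have hL01 : L (0, 1) = curveEvalDy f x₀ y₀ := by
    have hι : HasDerivAt (fun t : ℂ => ((x₀, t) : ℂ × ℂ)) ((0 : ℂ), (1 : ℂ)) y₀ :=
      (hasDerivAt_const y₀ x₀).prodMk (hasDerivAt_id y₀)
    have hcomp : HasDerivAt (fun t => Ff (x₀, t)) (L (0, 1)) y₀ :=
      (hstrict.hasFDerivAt.comp_hasDerivAt y₀ hι)
    exact hcomp.unique (hasDerivAt_curveEval f x₀ y₀)
  set A := L (1, 0) with hAdef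
  have hB : L (0, 1) ≠ 0 := by rw [hL01]; exact h1
  set E := shearEquiv A (L (0, 1)) hB with hEdef
  have hEL : (E : (ℂ × ℂ) →L[ℂ] (ℂ × ℂ))
      = (ContinuousLinearMap.fst ℂ ℂ ℂ).prod L := by
    apply ContinuousLinearMap.ext
    rintro ⟨u, v⟩
    have huv : ((u, v) : ℂ × ℂ) = u • ((1 : ℂ), (0 : ℂ)) + v • ((0 : ℂ), (1 : ℂ)) := by
      simp [Prod.ext_iff]
    show (u, A * u + L (0, 1) * v) = (u, L (u, v))
    refine Prod.ext rfl ?_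
    rw [huv, map_add, map_smul, map_smul, smul_eq_mul, smul_eq_mul, ← hAdef]
    ring
  set G : ℂ × ℂ → ℂ × ℂ := fun z => (z.1, Ff z) with hGdef
  have hG : HasStrictFDerivAt G (E : (ℂ × ℂ) →L[ℂ] (ℂ × ℂ)) (x₀, y₀) := by
    rw [hEL]; exact hasStrictFDerivAt_fst.prodMk hstrict
  set h := hG.toOpenPartialHomeomorph G with hhdef
  have hcoe : ⇑h = G := rfl
  have hsrc : (x₀, y₀) ∈ h.source := hG.mem_toOpenPartialHomeomorph_source
  have hG0 : G (x₀, y₀) = (x₀, 0) := by simp [hGdef, hFf, h0]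
  have htgt : ((x₀, 0) : ℂ × ℂ) ∈ h.target := by
    rw [← hG0]; exact hG.image_mem_toOpenPartialHomeomorph_target
  have hfst : ∀ w ∈ h.target, (h.symm w).1 = w.1 := by
    intro w hw
    have := h.right_inv hw
    rw [hcoe] at this
    have h3 : (G (h.symm w)).1 = w.1 := congrArg Prod.fst this
    exact h3

  set ψ : ℂ → ℂ := fun x => (h.symm (x, 0)).2 with hψdef
  set O1 : Set ℂ := {x | ((x, 0) : ℂ × ℂ) ∈ h.target} with hO1def
  have hO1open : IsOpen O1 :=
    h.open_target.preimage (continuous_id.prodMk continuous_const)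
  have hx₀O1 : x₀ ∈ O1 := htgt
  have key : ∀ x ∈ O1, h.symm (x, 0) = (x, ψ x) := fun x hx => Prod.ext (hfst _ hx) rfl
  have hψroot : ∀ x ∈ O1, curveEval f x (ψ x) = 0 := by
    intro x hx
    have h2 := h.right_inv hx
    rw [hcoe, key x hx] at h2
    have h3 : (G (x, ψ x)).2 = 0 := congrArg Prod.snd h2
    exact h3
  have hsymm0 : h.symm (x₀, 0) = (x₀, y₀) := by
    have := h.left_inv hsrc
    rw [hcoe, hG0] at this
    exact this
  have hψx₀ : ψ x₀ = y₀ := by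
    show (h.symm (x₀, 0)).2 = y₀
    rw [hsymm0]
  have hψcont : ContinuousOn ψ O1 := by
    refine continuous_snd.comp_continuousOn ?_
    exact h.continuousOn_invFun.comp ((continuous_id.prodMk continuous_const).continuousOn)
      fun x hx => hx
  obtain ⟨η, hηpos, hball⟩ := Metric.isOpen_iff.1 h.open_source (x₀, y₀) hsrc
  refine ⟨O1 ∩ Metric.ball x₀ η, ψ, hO1open.inter Metric.isOpen_ball, ⟨hx₀O1, by simpa using hηpos⟩,
    hψcont.mono Set.inter_subset_left, hψx₀, fun x hx => hψroot x hx.1, η, hηpos, ?_⟩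
  intro x hx y hy hroot
  have hmem : ((x, y) : ℂ × ℂ) ∈ h.source := by
    apply hball
    rw [Metric.mem_ball, Prod.dist_eq]
    exact max_lt (by simpa using hx.2) hy
  have h2 := h.left_inv hmem
  rw [hcoe] at h2
  have hGxy : G (x, y) = (x, 0) := by simp [hGdef, hFf, hroot]
  rw [hGxy, key x hx.1] at h2
  have h3 : ψ x = y := congrArg Prod.snd h2
  exact h3.symm

private lemma uniform_root_bound (f : Polynomial (Polynomial ℂ)) (hmonic : f.Monic) (p : ℂ) :
    ∃ M : ℝ, ∀ x : ℂ, dist x p ≤ 1 → ∀ y : ℂ, curveEval f x y = 0 → ‖y‖ ≤ M := by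
  set N := f.natDegree with hN
  set g : ℂ → ℝ := fun x => 1 + ∑ i ∈ Finset.range N, ‖(f.coeff i).eval x‖ with hg
  have hgcont : Continuous g := by
    apply continuous_const.add
    exact continuous_finset_sum _ fun i _ => (f.coeff i).continuous.norm
  obtain ⟨x₁, -, hx₁⟩ := (isCompact_closedBall p 1).exists_isMaxOn
    ⟨p, Metric.mem_closedBall_self zero_le_one⟩ hgcont.continuousOn
  refine ⟨g x₁, fun x hx y hy => ?_⟩
  set q := f.map (evalRingHom x) with hq
  have hqm : q.Monic := hmonic.map _
  have hqd : q.natDegree = N := by rw [hq, hmonic.natDegree_map]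
  have hroot : q.IsRoot y := hy
  have hlt := hroot.norm_lt_cauchyBound hqm.ne_zero
  have h1 : ((Finset.range N).sup fun i => (‖q.coeff i‖₊ : ℝ≥0))
      ≤ ∑ i ∈ Finset.range N, (‖q.coeff i‖₊ : ℝ≥0) :=
    Finset.sup_le fun i hi => Finset.single_le_sum (f := fun i => (‖q.coeff i‖₊ : ℝ≥0)) (fun _ _ => zero_le) hi
  set S : ℝ≥0 := (Finset.range N).sup fun i => ‖q.coeff i‖₊ with hS
  have h2 : (S : ℝ) ≤ ∑ i ∈ Finset.range N, ‖(f.coeff i).eval x‖ := by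
    calc (S : ℝ) ≤ ((∑ i ∈ Finset.range N, (‖q.coeff i‖₊ : ℝ≥0) : ℝ≥0) : ℝ) := by
          exact_mod_cast h1
      _ = ∑ i ∈ Finset.range N, ‖(f.coeff i).eval x‖ := by
          push_cast
          refine Finset.sum_congr rfl fun i _ => ?_
          rw [hq, Polynomial.coeff_map]
          rfl
  have hcb : (q.cauchyBound : ℝ) ≤ g x := by
    rw [Polynomial.cauchyBound, hqm.leadingCoeff]
    push_cast
    rw [norm_one, div_one, hqd]
    show (S : ℝ) + 1 ≤ 1 + ∑ i ∈ Finset.range N, ‖(f.coeff i).eval x‖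
    linarith [h2]
  have : ‖y‖ ≤ g x := le_trans (le_of_lt (by exact_mod_cast hlt)) hcb
  exact this.trans (hx₁ (by simpa [Metric.mem_closedBall] using hx))

private lemma build_homeo
    (f : Polynomial (Polynomial ℂ)) (p : ℂ) (U : Set ℂ)
    (R : Finset ℂ) (hmemR : ∀ y : ℂ, y ∈ R ↔ curveEval f p y = 0)
    (ψ : ℂ → ℂ → ℂ) (δ : ℝ) (hδ : 0 < δ)
    (hψcont : ∀ r ∈ R, ∀ x ∈ U, ContinuousAt (ψ r) x)
    (hclose : ∀ r ∈ R, ∀ x ∈ U, dist (ψ r x) r ≤ δ / (2 * (R.card + 1)))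
    (hsep : ∀ r ∈ R, ∀ s ∈ R, r ≠ s → ∀ x ∈ U, δ ≤ dist (ψ r x) (ψ s x))
    (hrootchar : ∀ x ∈ U, ∀ y : ℂ, curveEval f x y = 0 ↔ ∃ r ∈ R, y = ψ r x) :
    ∃ Φ : {z : ℂ × ℂ // z.1 ∈ U ∧ curveEval f z.1 z.2 ≠ 0} ≃ₜ
          (U × {y : ℂ // curveEval f p y ≠ 0}),
      ∀ z, ((Φ z).1 : ℂ) = (z : ℂ × ℂ).1 := by
  classical
  set m := R.card with hm
  set ε : ℝ := δ / (2 * (m + 1)) with hε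
  have hεpos : 0 < ε := by positivity
  set lam : ℂ → ℂ → ℂ → ℝ := fun r x y => max 0 (1 - dist y (ψ r x) / δ) with hlam
  set hh : ℂ → ℂ → ℂ := fun x y => ∑ r ∈ R, (lam r x y : ℂ) * (r - ψ r x) with hhh
  set Φr : ℂ → ℂ → ℂ := fun x y => y + hh x y with hΦr
  -- Lipschitz bound on `lam`
  have lamLip : ∀ r x y y', |lam r x y - lam r x y'| ≤ dist y y' / δ := by
    intro r x y y'
    have h1 : |lam r x y - lam r x y'|
        ≤ |(1 - dist y (ψ r x) / δ) - (1 - dist y' (ψ r x) / δ)| := by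
      rw [hlam]
      simp only []
      rw [max_comm 0 _, max_comm 0 _]
      exact abs_max_sub_max_le_abs _ _ _
    have h2 : (1 - dist y (ψ r x) / δ) - (1 - dist y' (ψ r x) / δ)
        = (dist y' (ψ r x) - dist y (ψ r x)) / δ := by ring
    rw [h2] at h1
    refine h1.trans ?_
    rw [abs_div, abs_of_pos hδ]
    gcongr
    have := abs_dist_sub_le y' y (ψ r x)
    rwa [dist_comm y' y] at this
  have lam_nonneg : ∀ r x y, 0 ≤ lam r x y := fun r x y => le_max_left _ _
  -- contraction estimate for `hh`
  have hLip : ∀ x ∈ U, ∀ y y' : ℂ, dist (hh x y) (hh x y') ≤ (1 / 2) * dist y y' := by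
    intro x hx y y'
    rw [dist_eq_norm, hhh]
    have : (∑ r ∈ R, (lam r x y : ℂ) * (r - ψ r x)) - ∑ r ∈ R, (lam r x y' : ℂ) * (r - ψ r x)
        = ∑ r ∈ R, ((lam r x y : ℂ) - (lam r x y' : ℂ)) * (r - ψ r x) := by
      rw [← Finset.sum_sub_distrib]
      exact Finset.sum_congr rfl fun r _ => by ring
    rw [this]
    refine (norm_sum_le _ _).trans ?_
    have hterm : ∀ r ∈ R, ‖((lam r x y : ℂ) - (lam r x y' : ℂ)) * (r - ψ r x)‖
        ≤ (dist y y' / δ) * ε := by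
      intro r hr
      rw [norm_mul]
      have h1 : ‖((lam r x y : ℂ) - (lam r x y' : ℂ))‖ ≤ dist y y' / δ := by
        rw [← Complex.ofReal_sub, Complex.norm_real, Real.norm_eq_abs]
        exact lamLip r x y y'
      have h2 : ‖r - ψ r x‖ ≤ ε := by
        rw [← dist_eq_norm, dist_comm]
        exact hclose r hr x hx
      exact mul_le_mul h1 h2 (norm_nonneg _) (by positivity)
    refine (Finset.sum_le_sum hterm).trans ?_
    rw [Finset.sum_const, nsmul_eq_mul, ← hm]
    have hkey : (m : ℝ) * (dist y y' / δ * ε) = ((m : ℝ) / (2 * (m + 1))) * dist y y' := by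
      rw [hε]; field_simp
    rw [hkey]
    have : ((m : ℝ) / (2 * (m + 1))) ≤ 1 / 2 := by
      rw [div_le_div_iff₀ (by positivity) (by norm_num)]
      push_cast
      linarith
    exact mul_le_mul_of_nonneg_right this dist_nonneg
  -- expansion lower bound
  have hexp : ∀ x ∈ U, ∀ y y' : ℂ, dist y y' ≤ 2 * dist (Φr x y) (Φr x y') := by
    intro x hx y y'
    have h1 : dist y y' ≤ dist (Φr x y) (Φr x y') + dist (hh x y) (hh x y') := by
      rw [dist_eq_norm, dist_eq_norm, dist_eq_norm, hΦr]
      simp only []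
      have : y - y' = ((y + hh x y) - (y' + hh x y')) - (hh x y - hh x y') := by ring
      rw [this]
      exact norm_sub_le _ _
    have h2 := hLip x hx y y'
    linarith
  have hinj : ∀ x ∈ U, ∀ y y' : ℂ, Φr x y = Φr x y' → y = y' := by
    intro x hx y y' hEq
    have := hexp x hx y y'
    rw [hEq, dist_self, mul_zero] at this
    exact dist_le_zero.1 this
  -- the pushed roots
  have hfix : ∀ r ∈ R, ∀ x ∈ U, Φr x (ψ r x) = r := by
    intro r hr x hx
    have hsum : hh x (ψ r x) = r - ψ r x := by
      rw [hhh]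
      simp only []
      rw [Finset.sum_eq_single_of_mem r hr]
      · have : lam r x (ψ r x) = 1 := by
          rw [hlam]; simp [dist_self, hδ.le]
        rw [this]; simp
      · intro s hs hsr
        have hdist : δ ≤ dist (ψ r x) (ψ s x) := by
          rw [dist_comm]
          exact hsep s hs r hr hsr x hx
        have : lam s x (ψ r x) = 0 := by
          rw [hlam]
          simp only []
          rw [max_eq_left]
          have h1 : (1 : ℝ) ≤ dist (ψ r x) (ψ s x) / δ := (one_le_div hδ).2 hdist
          linarith
        rw [this]
        simp
    rw [hΦr]
    simp only []
    rw [hsum]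
    ring
  -- surjectivity via Banach fixed point
  have hsurj : ∀ x ∈ U, ∀ z : ℂ, ∃ y, Φr x y = z := by
    intro x hx z
    set g : ℂ → ℂ := fun y => z - hh x y with hg
    have hlip : LipschitzWith (1 / 2 : ℝ≥0) g := by
      apply LipschitzWith.of_dist_le_mul
      intro y y'
      have : dist (g y) (g y') = dist (hh x y) (hh x y') := by
        rw [hg]; simp only []; rw [dist_sub_left]
      rw [this]
      refine (hLip x hx y y').trans ?_
      apply mul_le_mul_of_nonneg_right ?_ dist_nonneg
      norm_num
    have hcontr : ContractingWith (1 / 2 : ℝ≥0) g := ⟨NNReal.half_lt_self one_ne_zero, hlip⟩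
    refine ⟨ContractingWith.fixedPoint g hcontr, ?_⟩
    have hfp : g (ContractingWith.fixedPoint g hcontr) = ContractingWith.fixedPoint g hcontr :=
      hcontr.fixedPoint_isFixedPt
    have hfp2 : z - hh x (ContractingWith.fixedPoint g hcontr)
        = ContractingWith.fixedPoint g hcontr := hfp
    show ContractingWith.fixedPoint g hcontr + hh x (ContractingWith.fixedPoint g hcontr) = z
    linear_combination -hfp2
  -- root correspondence
  have hrootΦ : ∀ x ∈ U, ∀ y : ℂ, curveEval f x y = 0 ↔ curveEval f p (Φr x y) = 0 := by
    intro x hx y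
    constructor
    · intro h0
      obtain ⟨r, hr, rfl⟩ := (hrootchar x hx y).1 h0
      rw [hfix r hr x hx]
      exact (hmemR r).1 hr
    · intro h0
      have hR : Φr x y ∈ R := (hmemR _).2 h0
      have h1 : Φr x (ψ (Φr x y) x) = Φr x y := hfix _ hR x hx
      have h2 : y = ψ (Φr x y) x := hinj x hx _ _ h1.symm
      exact (hrootchar x hx y).2 ⟨Φr x y, hR, h2⟩
  -- joint continuity
  have hcontΦ : ∀ x ∈ U, ∀ y : ℂ, ContinuousAt (fun w : ℂ × ℂ => Φr w.1 w.2) (x, y) := by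
    intro x hx y
    have hhc : ContinuousAt (fun w : ℂ × ℂ => hh w.1 w.2) (x, y) := by
      rw [hhh]
      simp only []
      have : ∀ r ∈ R, ContinuousAt
          (fun w : ℂ × ℂ => (lam r w.1 w.2 : ℂ) * (r - ψ r w.1)) (x, y) := by
        intro r hr
        have hψr : ContinuousAt (fun w : ℂ × ℂ => ψ r w.1) (x, y) :=
          (hψcont r hr x hx).comp continuousAt_fst
        have hdist : ContinuousAt (fun w : ℂ × ℂ => dist w.2 (ψ r w.1)) (x, y) :=
          continuousAt_snd.dist hψr
        have hlamc : ContinuousAt (fun w : ℂ × ℂ => lam r w.1 w.2) (x, y) := by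
          rw [hlam]
          exact continuousAt_const.max (continuousAt_const.sub (hdist.div_const δ))
        exact ((Complex.continuous_ofReal.continuousAt.comp hlamc)).mul
          (continuousAt_const.sub hψr)
      exact tendsto_finset_sum _ fun r hr => this r hr
    exact continuousAt_snd.add hhc
  -- the forward map
  have hmemCod : ∀ z : {z : ℂ × ℂ // z.1 ∈ U ∧ curveEval f z.1 z.2 ≠ 0},
      curveEval f p (Φr (z : ℂ × ℂ).1 (z : ℂ × ℂ).2) ≠ 0 := by
    intro z h0
    exact z.2.2 ((hrootΦ _ z.2.1 _).2 h0)
  set T : {z : ℂ × ℂ // z.1 ∈ U ∧ curveEval f z.1 z.2 ≠ 0} →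
      (U × {y : ℂ // curveEval f p y ≠ 0}) :=
    fun z => (⟨(z : ℂ × ℂ).1, z.2.1⟩, ⟨Φr (z : ℂ × ℂ).1 (z : ℂ × ℂ).2, hmemCod z⟩) with hT
  have hTbij : Function.Bijective T := by
    constructor
    · rintro ⟨⟨x, y⟩, hx, hy⟩ ⟨⟨x', y'⟩, hx', hy'⟩ hEq
      have h1 : x = x' := congrArg (fun w => ((w.1 : ℂ))) hEq
      subst h1
      have h2 : Φr x y = Φr x y' := congrArg (fun w => ((w.2 : ℂ))) hEq
      have h3 : y = y' := hinj x hx _ _ h2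
      subst h3
      rfl
    · rintro ⟨⟨x, hx⟩, ⟨z, hz⟩⟩
      obtain ⟨y, hy⟩ := hsurj x hx z
      have hne : curveEval f x y ≠ 0 := by
        intro h0
        exact hz (by rw [← hy]; exact (hrootΦ x hx y).1 h0)
      refine ⟨⟨(x, y), hx, hne⟩, ?_⟩
      rw [hT]
      exact Prod.ext rfl (Subtype.ext hy)
  have hTcont : Continuous T := by
    rw [hT]
    refine Continuous.prodMk ?_ ?_
    · exact Continuous.subtype_mk (continuous_fst.comp continuous_subtype_val) _
    · refine Continuous.subtype_mk ?_ _
      rw [continuous_iff_continuousAt]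
      intro z
      have hcc : ContinuousAt ((fun w : ℂ × ℂ => Φr w.1 w.2) ∘ Subtype.val) z :=
        ContinuousAt.comp (hcontΦ _ z.2.1 (z : ℂ × ℂ).2) continuous_subtype_val.continuousAt
      exact hcc
  set e := Equiv.ofBijective T hTbij with he
  have hfst_inv : ∀ w : U × {y : ℂ // curveEval f p y ≠ 0},
      ((e.symm w : ℂ × ℂ)).1 = (w.1 : ℂ) := by
    intro w
    have h0 := e.apply_symm_apply w
    exact congrArg (fun v : U × {y : ℂ // curveEval f p y ≠ 0} => ((v.1 : ℂ))) h0
  set yinv : (U × {y : ℂ // curveEval f p y ≠ 0}) → ℂ :=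
    fun w => ((e.symm w : ℂ × ℂ)).2 with hyinv
  have hΦyinv : ∀ w, Φr (w.1 : ℂ) (yinv w) = (w.2 : ℂ) := by
    intro w
    have h0 := e.apply_symm_apply w
    have h2 := congrArg (fun v : U × {y : ℂ // curveEval f p y ≠ 0} => ((v.2 : ℂ))) h0
    rw [← hfst_inv w]
    exact h2
  have hvaleq : (fun w => ((e.symm w : ℂ × ℂ))) =
      fun w : U × {y : ℂ // curveEval f p y ≠ 0} => (((w.1 : ℂ)), yinv w) :=
    funext fun w => Prod.ext (hfst_inv w) rfl
  have hsymm_cont : Continuous e.symm := by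
    apply continuous_induced_rng.2
    show Continuous fun w => ((e.symm w : ℂ × ℂ))
    rw [hvaleq, continuous_iff_continuousAt]
    intro w₀
    have hx₀U : ((w₀.1 : ℂ)) ∈ U := w₀.1.2
    apply ContinuousAt.prodMk
    · exact (continuous_subtype_val.comp continuous_fst).continuousAt
    · rw [ContinuousAt, tendsto_iff_dist_tendsto_zero]
      have key : ∀ w : U × {y : ℂ // curveEval f p y ≠ 0},
          dist (yinv w) (yinv w₀) ≤ 2 * dist ((w.2 : ℂ)) (Φr (w.1 : ℂ) (yinv w₀)) := by
        intro w
        have h1 := hexp (w.1 : ℂ) w.1.2 (yinv w) (yinv w₀)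
        rwa [hΦyinv w] at h1
      have h2 : ContinuousAt ((fun w : ℂ × ℂ => Φr w.1 w.2) ∘
          (fun w : U × {y : ℂ // curveEval f p y ≠ 0} => (((w.1 : ℂ)), yinv w₀))) w₀ :=
        ContinuousAt.comp (hcontΦ _ hx₀U (yinv w₀))
          (((continuous_subtype_val.comp continuous_fst).prodMk continuous_const).continuousAt)
      have h3 : Filter.Tendsto (fun w : U × {y : ℂ // curveEval f p y ≠ 0} =>
          2 * dist ((w.2 : ℂ)) (Φr (w.1 : ℂ) (yinv w₀))) (nhds w₀)
          (nhds (2 * dist ((w₀.2 : ℂ)) (Φr (w₀.1 : ℂ) (yinv w₀)))) :=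
        (continuousAt_const.mul
          (((continuous_subtype_val.comp continuous_snd).continuousAt).dist h2))
      rw [hΦyinv w₀, dist_self, mul_zero] at h3
      exact squeeze_zero (fun w => dist_nonneg) key h3
  exact ⟨Homeomorph.mk e hTcont hsymm_cont, fun z => rfl⟩

set_option maxHeartbeats 2000000 in
theorem local_triviality_of_projection
    (n : ℕ) (hn : 1 ≤ n) (f : Polynomial (Polynomial ℂ))
    (hmonic : f.Monic) (hdeg : f.natDegree = n)
    (p : ℂ) (hp : p ∉ critValues f) :
    ∃ U : Set ℂ, IsOpen U ∧ p ∈ U ∧ U ∩ critValues f = ∅ ∧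
      ∃ Φ : {z : ℂ × ℂ // z.1 ∈ U ∧ curveEval f z.1 z.2 ≠ 0} ≃ₜ
            (U × {y : ℂ // curveEval f p y ≠ 0}),
        ∀ z, ((Φ z).1 : ℂ) = (z : ℂ × ℂ).1 := by
  classical
  set R : Finset ℂ := (f.map (evalRingHom p)).roots.toFinset with hR
  have hmapne : ∀ x : ℂ, f.map (evalRingHom x) ≠ 0 := fun x =>
    (hmonic.map (evalRingHom x)).ne_zero
  have hmemR : ∀ y : ℂ, y ∈ R ↔ curveEval f p y = 0 := by
    intro y
    rw [hR, Multiset.mem_toFinset, Polynomial.mem_roots (hmapne p)]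
    exact Iff.rfl
  have hpD : ∀ y : ℂ, curveEval f p y = 0 → curveEvalDy f p y ≠ 0 := by
    intro y h0 h1
    exact hp ⟨y, h0, h1⟩
  have hdata' : ∀ r : ℂ, ∃ (O : Set ℂ) (ψ : ℂ → ℂ) (η : ℝ), r ∈ R →
      IsOpen O ∧ p ∈ O ∧ ContinuousOn ψ O ∧ ψ p = r ∧
      (∀ x ∈ O, curveEval f x (ψ x) = 0) ∧ 0 < η ∧
      (∀ x ∈ O, ∀ y : ℂ, dist y r < η → curveEval f x y = 0 → y = ψ x) := by
    intro r
    by_cases hr : r ∈ R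
    · obtain ⟨O, ψ, h1, h2, h3, h4, h5, η, hη, h6⟩ :=
        localRootData f p r ((hmemR r).1 hr) (hpD r ((hmemR r).1 hr))
      exact ⟨O, ψ, η, fun _ => ⟨h1, h2, h3, h4, h5, hη, h6⟩⟩
    · exact ⟨∅, fun _ => 0, 1, fun h => absurd h hr⟩
  choose O ψ η hdata using hdata'
  set m := R.card with hm
  have hRsep : ∃ d : ℝ, 0 < d ∧ ∀ r ∈ R, ∀ s ∈ R, r ≠ s → d ≤ dist r s := by
    by_cases hne : R.offDiag.Nonempty
    · refine ⟨R.offDiag.inf' hne (fun q => dist q.1 q.2), ?_, ?_⟩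
      · rw [Finset.lt_inf'_iff hne]
        rintro ⟨r, s⟩ hq
        rw [Finset.mem_offDiag] at hq
        exact dist_pos.2 hq.2.2
      · intro r hr s hs hrs
        exact Finset.inf'_le (f := fun q : ℂ × ℂ => dist q.1 q.2)
          ((Finset.mem_offDiag (x := (r, s))).2 ⟨hr, hs, hrs⟩)
    · refine ⟨1, one_pos, fun r hr s hs hrs => ?_⟩
      exact absurd ⟨(r, s), (Finset.mem_offDiag (x := (r, s))).2 ⟨hr, hs, hrs⟩⟩ hne
  obtain ⟨d, hd, hdle⟩ := hRsep
  set δ : ℝ := d / 4 with hδdef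
  have hδ : 0 < δ := by positivity
  set ε : ℝ := δ / (2 * (m + 1)) with hεdef
  have hε : 0 < ε := by positivity
  have hεδ : ε ≤ δ := by
    rw [hεdef]
    apply div_le_self hδ.le
    have : (0:ℝ) ≤ (m : ℝ) := Nat.cast_nonneg m
    linarith
  have hηm : ∃ e0 : ℝ, 0 < e0 ∧ ∀ r ∈ R, e0 ≤ η r := by
    by_cases hne : R.Nonempty
    · refine ⟨R.inf' hne η, ?_, fun r hr => Finset.inf'_le (f := η) hr⟩
      rw [Finset.lt_inf'_iff hne]
      intro r hr
      exact (hdata r hr).2.2.2.2.2.1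
    · exact ⟨1, one_pos, fun r hr => absurd ⟨r, hr⟩ hne⟩
  obtain ⟨e0, he0, he0le⟩ := hηm
  obtain ⟨M, hM⟩ := uniform_root_bound f hmonic p
  -- eventually, all roots are near the fiber roots
  have hev4 : ∀ᶠ x in nhds p, ∀ y : ℂ, curveEval f x y = 0 → ∃ r ∈ R, dist y r < e0 := by
    set K : Set (ℂ × ℂ) := {z : ℂ × ℂ | dist z.1 p ≤ 1} ∩
      ({z : ℂ × ℂ | curveEval f z.1 z.2 = 0} ∩ {z : ℂ × ℂ | ∀ r ∈ R, e0 ≤ dist z.2 r}) with hK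
    have hKclosed : IsClosed K := by
      refine IsClosed.inter ?_ (IsClosed.inter ?_ ?_)
      · exact isClosed_le (continuous_fst.dist continuous_const) continuous_const
      · exact isClosed_eq (contDiff_curveEval f).continuous continuous_const
      · have heq : {z : ℂ × ℂ | ∀ r ∈ R, e0 ≤ dist z.2 r}
            = ⋂ r ∈ R, {z : ℂ × ℂ | e0 ≤ dist z.2 r} := by
          ext z; simp
        rw [heq]
        exact isClosed_biInter fun r hr =>
          isClosed_le continuous_const (continuous_snd.dist continuous_const)
    have hKbdd : Bornology.IsBounded K := by
      apply Bornology.IsBounded.subset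
        ((Metric.isBounded_closedBall (x := p) (r := 1)).prod
          (Metric.isBounded_closedBall (x := (0:ℂ)) (r := M)))
      rintro ⟨x, y⟩ hz
      refine ⟨?_, ?_⟩
      · exact Metric.mem_closedBall.2 hz.1
      · rw [Metric.mem_closedBall, dist_zero_right]
        exact hM x hz.1 y hz.2.1
    have hKcomp : IsCompact K := Metric.isCompact_of_isClosed_isBounded hKclosed hKbdd
    have hKim : IsCompact (Prod.fst '' K) := hKcomp.image continuous_fst
    have hpnot : p ∉ Prod.fst '' K := by
      rintro ⟨⟨x, y⟩, hzK, hfst⟩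
      simp only at hfst
      subst hfst
      have hyR : y ∈ R := (hmemR y).2 hzK.2.1
      have := hzK.2.2 y hyR
      rw [dist_self] at this
      linarith
    have hcompl : ∀ᶠ x in nhds p, x ∉ Prod.fst '' K :=
      hKim.isClosed.isOpen_compl.eventually_mem hpnot
    have hball : ∀ᶠ x in nhds p, dist x p ≤ 1 := by
      filter_upwards [Metric.closedBall_mem_nhds p one_pos] with x hx
      exact Metric.mem_closedBall.1 hx
    filter_upwards [hcompl, hball] with x h1 h2
    intro y hy
    by_contra hcon
    push_neg at hcon
    exact h1 ⟨(x, y), ⟨h2, hy, hcon⟩, rfl⟩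
  have hψcontp : ∀ r ∈ R, ContinuousAt (ψ r) p := fun r hr =>
    ((hdata r hr).2.2.1).continuousAt (((hdata r hr).1).mem_nhds (hdata r hr).2.1)
  have hev1 : ∀ᶠ x in nhds p, ∀ r ∈ R, x ∈ O r := by
    rw [Filter.eventually_all_finset]
    intro r hr
    exact ((hdata r hr).1).mem_nhds ((hdata r hr).2.1)
  have hev2 : ∀ᶠ x in nhds p, ∀ r ∈ R, dist (ψ r x) r < ε := by
    rw [Filter.eventually_all_finset]
    intro r hr
    have ht := (hψcontp r hr).tendsto
    rw [(hdata r hr).2.2.2.1] at ht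
    filter_upwards [ht (Metric.ball_mem_nhds r hε)] with x hx
    exact Metric.mem_ball.1 hx
  have hev3 : ∀ᶠ x in nhds p, ∀ r ∈ R, curveEvalDy f x (ψ r x) ≠ 0 := by
    rw [Filter.eventually_all_finset]
    intro r hr
    have hc : ContinuousAt (fun x : ℂ => curveEvalDy f x (ψ r x)) p := by
      have houter : ContinuousAt (fun z : ℂ × ℂ => curveEval f.derivative z.1 z.2)
          (p, ψ r p) := (contDiff_curveEval f.derivative).continuous.continuousAt
      have hcomp : ContinuousAt ((fun z : ℂ × ℂ => curveEval f.derivative z.1 z.2) ∘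
          (fun x : ℂ => (x, ψ r x))) p :=
        ContinuousAt.comp houter (continuousAt_id.prodMk (hψcontp r hr))
      exact hcomp
    have hval : curveEvalDy f p (ψ r p) ≠ 0 := by
      rw [(hdata r hr).2.2.2.1]
      exact hpD r ((hmemR r).1 hr)
    exact hc.eventually_ne hval
  have hev := hev1.and (hev2.and (hev3.and hev4))
  obtain ⟨U, hUsub, hUopen, hpU⟩ := eventually_nhds_iff.1 hev
  -- root characterization on U
  have hrootchar : ∀ x ∈ U, ∀ y : ℂ, curveEval f x y = 0 ↔ ∃ r ∈ R, y = ψ r x := by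
    intro x hx y
    constructor
    · intro h0
      obtain ⟨r, hr, hyr⟩ := (hUsub x hx).2.2.2 y h0
      refine ⟨r, hr, ?_⟩
      exact (hdata r hr).2.2.2.2.2.2 x ((hUsub x hx).1 r hr) y
        (lt_of_lt_of_le hyr (he0le r hr)) h0
    · rintro ⟨r, hr, rfl⟩
      exact (hdata r hr).2.2.2.2.1 x ((hUsub x hx).1 r hr)
  -- U avoids the critical values
  have hcrit : U ∩ critValues f = ∅ := by
    rw [Set.eq_empty_iff_forall_notMem]
    rintro x ⟨hxU, y, h0, h1⟩
    obtain ⟨r, hr, rfl⟩ := (hrootchar x hxU y).1 h0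
    exact (hUsub x hxU).2.2.1 r hr h1
  -- build the homeomorphism
  have hψcont : ∀ r ∈ R, ∀ x ∈ U, ContinuousAt (ψ r) x := fun r hr x hx =>
    ((hdata r hr).2.2.1).continuousAt (((hdata r hr).1).mem_nhds ((hUsub x hx).1 r hr))
  have hclose : ∀ r ∈ R, ∀ x ∈ U, dist (ψ r x) r ≤ δ / (2 * (R.card + 1)) := by
    intro r hr x hx
    exact le_of_lt ((hUsub x hx).2.1 r hr)
  have hsep : ∀ r ∈ R, ∀ s ∈ R, r ≠ s → ∀ x ∈ U, δ ≤ dist (ψ r x) (ψ s x) := by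
    intro r hr s hs hrs x hx
    have h1 : d ≤ dist r s := hdle r hr s hs hrs
    have h2 : dist (ψ r x) r < ε := (hUsub x hx).2.1 r hr
    have h3 : dist (ψ s x) s < ε := (hUsub x hx).2.1 s hs
    have h4 : dist r s ≤ dist r (ψ r x) + dist (ψ r x) (ψ s x) + dist (ψ s x) s :=
      dist_triangle4 r (ψ r x) (ψ s x) s
    rw [dist_comm r (ψ r x)] at h4
    have h5 : δ = d / 4 := hδdef
    linarith
  obtain ⟨Φ, hΦ⟩ := build_homeo f p U R hmemR ψ δ hδ hψcont hclose hsep hrootchar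
  exact ⟨U, hUopen, hpU, hcrit, Φ, hΦ⟩
end

section
/- Let n ≥ 1 and let f be a polynomial in two complex variables, viewed as an element of (ℂ[x])[y], which is monic in y of degree n. Then the map from the subspace {(x,y) ∈ ℂ × ℂ : F(x,y) = 0 ∧ x ∉ X_f} to the subspace {x ∈ ℂ : x ∉ X_f} sending (x,y) to x is a covering map. (The curve, away from the critical fibers, is a covering space of the base; this is what produces the braid of n strands over a loop in the base.) -/
open Polynomial

open NNReal

namespace CurveCover

variable (f : Polynomial (Polynomial ℂ))

lemma curveEval_eq (x y : ℂ) : curveEval f x y = (f.map (evalRingHom x)).eval y := rfl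

lemma root_near_of_small {p : Polynomial ℂ} (hp : p.Monic) {ε : ℝ≥0}
    {y : ℂ} (hy : ‖p.eval y‖₊ < ε ^ p.natDegree) : ∃ r ∈ p.roots, ‖y - r‖₊ < ε := by
  by_contra h
  push_neg at h
  have hfact := (IsAlgClosed.splits p).eq_prod_roots_of_monic hp
  have hcard : p.roots.card = p.natDegree := splits_iff_card_roots.mp (IsAlgClosed.splits p)
  have heval : p.eval y = ((p.roots.map fun a => y - a)).prod := by
    conv_lhs => rw [hfact]
    rw [eval_multiset_prod, Multiset.map_map]
    simp
  have hnorm : ‖p.eval y‖₊ = ((p.roots.map fun a => ‖y - a‖₊)).prod := by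
    rw [heval]
    simpa [Multiset.map_map] using map_multiset_prod (nnnormHom : ℂ →*₀ ℝ≥0).toMonoidHom
      (p.roots.map fun a => y - a)
  have hge : ε ^ p.natDegree ≤ ‖p.eval y‖₊ := by
    rw [hnorm, ← hcard, ← Multiset.card_map (fun a => ‖y - a‖₊) p.roots]
    refine Multiset.pow_card_le_prod ?_
    intro x hx
    obtain ⟨a, ha, rfl⟩ := Multiset.mem_map.mp hx
    exact h a ha
  exact absurd hy (not_lt.mpr hge)

lemma monic_fiber (hmonic : f.Monic) (x : ℂ) : (f.map (evalRingHom x)).Monic := hmonic.map _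

lemma natDegree_fiber (hmonic : f.Monic) (x : ℂ) : (f.map (evalRingHom x)).natDegree = f.natDegree :=
  hmonic.natDegree_map _

lemma card_roots_fiber (hmonic : f.Monic) (x : ℂ) : Multiset.card (f.map (evalRingHom x)).roots = f.natDegree := by
  rw [splits_iff_card_roots.mp (IsAlgClosed.splits _), natDegree_fiber f hmonic]

lemma exists_root_near (hmonic : f.Monic) {n : ℕ} (hdeg : f.natDegree = n) (x : ℂ) {ε : ℝ≥0}
    {y : ℂ} (hy : ‖curveEval f x y‖₊ < ε ^ n) :
    ∃ r, curveEval f x r = 0 ∧ ‖r - y‖₊ < ε := by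
  simp only [curveEval_eq] at hy ⊢
  obtain ⟨r, hr, hr2⟩ := root_near_of_small (monic_fiber f hmonic x)
    (by rwa [natDegree_fiber f hmonic, hdeg])
  exact ⟨r, ((mem_roots'.mp hr).2 : _), by rwa [← neg_sub, nnnorm_neg]⟩

lemma roots_nodup (hmonic : f.Monic) {x : ℂ} (hx : x ∉ critValues f) : (f.map (evalRingHom x)).roots.Nodup := by
  set p := f.map (evalRingHom x) with hp
  have hpm : p.Monic := monic_fiber f hmonic x
  have hp0 : p ≠ 0 := hpm.ne_zero
  rw [Multiset.nodup_iff_count_le_one]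
  intro y
  by_contra hcount
  push_neg at hcount
  have h2 : 2 ≤ rootMultiplicity y p := by rwa [← count_roots]
  obtain ⟨q, hq⟩ := (le_rootMultiplicity_iff hp0).mp h2
  refine hx ⟨y, ?_, ?_⟩
  · show p.eval y = 0
    simp [hq]
  · have : curveEvalDy f x y = (derivative p).eval y := by
      rw [curveEvalDy, curveEval, hp, derivative_map]
    rw [this, hq]
    simp [derivative_mul, derivative_pow]

lemma continuous_curveEval : Continuous fun z : ℂ × ℂ => curveEval f z.1 z.2 := by
  have h : (fun z : ℂ × ℂ => curveEval f z.1 z.2) = fun z : ℂ × ℂ =>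
      ∑ i ∈ Finset.range (f.natDegree + 1), (f.coeff i).eval z.1 * z.2 ^ i := by
    funext z
    rw [curveEval, eval_map, eval₂_eq_sum_range]
    rfl
  rw [h]
  exact continuous_finset_sum _ fun i _ =>
    ((f.coeff i).continuous.comp continuous_fst).mul (continuous_snd.pow i)


lemma exists_sep (R : Finset ℂ) :
    ∃ ε : ℝ≥0, 0 < ε ∧ ∀ r ∈ R, ∀ r' ∈ R, r ≠ r' → 2 * ε ≤ ‖r - r'‖₊ := by
  classical
  set s : Finset ℝ≥0 :=
    insert 1 (((R ×ˢ R).filter fun p => p.1 ≠ p.2).image fun p => ‖p.1 - p.2‖₊ / 2) with hs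
  have hne : s.Nonempty := ⟨1, Finset.mem_insert_self _ _⟩
  refine ⟨s.min' hne, ?_, ?_⟩
  · rw [Finset.lt_min'_iff]
    intro a ha
    rw [hs, Finset.mem_insert] at ha
    rcases ha with rfl | ha
    · exact one_pos
    · obtain ⟨p, hp, rfl⟩ := Finset.mem_image.mp ha
      have hne' : p.1 ≠ p.2 := (Finset.mem_filter.mp hp).2
      have h0 : p.1 - p.2 ≠ 0 := sub_ne_zero_of_ne hne'
      rw [pos_iff_ne_zero]
      exact div_ne_zero (nnnorm_ne_zero_iff.mpr h0) two_ne_zero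
  · intro r hr r' hr' hne'
    have hmem : ‖r - r'‖₊ / 2 ∈ s := by
      rw [hs, Finset.mem_insert]
      right
      exact Finset.mem_image.mpr ⟨(r, r'), Finset.mem_filter.mpr
        ⟨Finset.mem_product.mpr ⟨hr, hr'⟩, hne'⟩, rfl⟩
    have := Finset.min'_le s _ hmem
    calc 2 * s.min' hne ≤ 2 * (‖r - r'‖₊ / 2) := by gcongr
      _ = ‖r - r'‖₊ := by
        rw [mul_div_cancel₀]
        exact two_ne_zero

set_option maxHeartbeats 2000000 in
lemma key_count (hmonic : f.Monic) {n : ℕ} (hdeg : f.natDegree = n) {x : ℂ}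
    (hx : x ∉ critValues f) {R : Finset ℂ} (hRcard : R.card = n) {ε : ℝ≥0}
    (hsep : ∀ y r r', r ∈ R → r' ∈ R → ‖y - r‖₊ < ε → ‖y - r'‖₊ < ε → r = r')
    (hsmall : ∀ r ∈ R, ‖curveEval f x r‖₊ < ε ^ n) :
    (∀ y, curveEval f x y = 0 → ∃ r ∈ R, ‖y - r‖₊ < ε) ∧
    (∀ r ∈ R, ∀ y y', curveEval f x y = 0 → curveEval f x y' = 0 →
      ‖y - r‖₊ < ε → ‖y' - r‖₊ < ε → y = y') := by
  classical
  have hmem : ∀ y, y ∈ (f.map (evalRingHom x)).roots.toFinset ↔ curveEval f x y = 0 := by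
    intro y
    rw [Multiset.mem_toFinset, mem_roots', curveEval_eq]
    simp [(monic_fiber f hmonic x).ne_zero, IsRoot]
  have hRxcard : (f.map (evalRingHom x)).roots.toFinset.card = n := by
    rw [Multiset.toFinset_card_of_nodup (roots_nodup f hmonic hx), card_roots_fiber f hmonic,
      hdeg]
  have hex : ∀ r ∈ R, ∃ y, curveEval f x y = 0 ∧ ‖y - r‖₊ < ε := fun r hr =>
    exists_root_near f hmonic hdeg x (hsmall r hr)
  choose g hg1 hg2 using hex
  have hinj : ∀ (r₁ r₂ : ℂ) (h₁ : r₁ ∈ R) (h₂ : r₂ ∈ R), g r₁ h₁ = g r₂ h₂ → r₁ = r₂ := by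
    intro r₁ r₂ h₁ h₂ heq
    refine hsep (g r₁ h₁) r₁ r₂ h₁ h₂ (hg2 r₁ h₁) ?_
    rw [heq]
    exact hg2 r₂ h₂
  have hsurj := Finset.surj_on_of_inj_on_of_card_le (t := (f.map (evalRingHom x)).roots.toFinset)
    g (fun r hr => (hmem _).mpr (hg1 r hr)) hinj (le_of_eq (by rw [hRxcard, hRcard]))
  constructor
  · intro y hy
    obtain ⟨r, hr, hyr⟩ := hsurj y ((hmem y).mpr hy)
    refine ⟨r, hr, ?_⟩
    rw [hyr]
    exact hg2 r hr
  · intro r hr y y' hy hy' hyr hy'r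
    obtain ⟨r₁, h₁, e₁⟩ := hsurj y ((hmem y).mpr hy)
    obtain ⟨r₂, h₂, e₂⟩ := hsurj y' ((hmem y').mpr hy')
    have hr₁ : r₁ = r := hsep y r₁ r h₁ hr (by rw [e₁]; exact hg2 r₁ h₁) hyr
    have hr₂ : r₂ = r := hsep y' r₂ r h₂ hr (by rw [e₂]; exact hg2 r₂ h₂) hy'r
    subst hr₁; subst hr₂
    rw [e₁, e₂]

open scoped Classical in
noncomputable def pickRoot (f : Polynomial (Polynomial ℂ)) (ε : ℝ≥0) (r x : ℂ) : ℂ :=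
  if h : ∃ y, curveEval f x y = 0 ∧ ‖y - r‖₊ < ε then h.choose else 0

lemma pickRoot_spec {ε : ℝ≥0} {r x : ℂ} (h : ∃ y, curveEval f x y = 0 ∧ ‖y - r‖₊ < ε) :
    curveEval f x (pickRoot f ε r x) = 0 ∧ ‖pickRoot f ε r x - r‖₊ < ε := by
  rw [pickRoot]
  rw [dif_pos h]
  exact h.choose_spec

open scoped Classical in
noncomputable def nearRoot (R : Finset ℂ) (ε : ℝ≥0) (y : ℂ) : ℂ :=
  if h : ∃ r ∈ R, ‖y - r‖₊ < ε then h.choose else 0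

lemma nearRoot_spec {R : Finset ℂ} {ε : ℝ≥0} {y : ℂ} (h : ∃ r ∈ R, ‖y - r‖₊ < ε) :
    nearRoot R ε y ∈ R ∧ ‖y - nearRoot R ε y‖₊ < ε := by
  rw [nearRoot]
  rw [dif_pos h]
  exact ⟨h.choose_spec.1, h.choose_spec.2⟩

lemma pickRoot_continuousWithinAt (hmonic : f.Monic) {n : ℕ} (hdeg : f.natDegree = n)
    {ε : ℝ≥0} {s : Set ℂ} {r : ℂ}
    (huniq : ∀ x ∈ s, ∀ y y', curveEval f x y = 0 → curveEval f x y' = 0 →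
      ‖y - r‖₊ < ε → ‖y' - r‖₊ < ε → y = y')
    (hex : ∀ x ∈ s, ∃ y, curveEval f x y = 0 ∧ ‖y - r‖₊ < ε)
    {x : ℂ} (hx : x ∈ s) : ContinuousWithinAt (pickRoot f ε r) s x := by
  have hspec := pickRoot_spec (f := f) (hex x hx)
  set y₀ := pickRoot f ε r x with hy₀
  rw [ContinuousWithinAt, Metric.tendsto_nhds]
  intro δ hδ
  set η : ℝ≥0 := min δ.toNNReal (ε - ‖y₀ - r‖₊) with hη
  have hη0 : 0 < η := lt_min (Real.toNNReal_pos.mpr hδ) (tsub_pos_of_lt hspec.2)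
  have hev : ∀ᶠ x' in nhds x, ‖curveEval f x' y₀‖₊ < η ^ n := by
    have hc : Continuous fun x' => ‖curveEval f x' y₀‖₊ :=
      ((continuous_curveEval (f := f)).comp (continuous_id.prodMk continuous_const)).nnnorm
    have h0 : ‖curveEval f x y₀‖₊ = 0 := by rw [hspec.1]; simp
    have hlt : ‖curveEval f x y₀‖₊ < η ^ n := by
      rw [h0]
      exact pow_pos hη0 n
    exact (hc.continuousAt (x := x)).eventually_lt continuousAt_const hlt
  filter_upwards [self_mem_nhdsWithin,
    Filter.Eventually.filter_mono nhdsWithin_le_nhds hev] with x' hx's hx'e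
  obtain ⟨z, hz, hzy⟩ := exists_root_near f hmonic hdeg x' hx'e
  have hzyε : ‖z - y₀‖₊ < η := hzy
  have hzr : ‖z - r‖₊ < ε := by
    have htri : ‖z - r‖₊ ≤ ‖z - y₀‖₊ + ‖y₀ - r‖₊ := by
      simpa [← nndist_eq_nnnorm] using nndist_triangle z y₀ r
    have h1 : ‖z - y₀‖₊ + ‖y₀ - r‖₊ < η + ‖y₀ - r‖₊ := by gcongr
    have h2 : η + ‖y₀ - r‖₊ ≤ ε := by
      have := min_le_right δ.toNNReal (ε - ‖y₀ - r‖₊)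
      calc η + ‖y₀ - r‖₊ ≤ (ε - ‖y₀ - r‖₊) + ‖y₀ - r‖₊ := by gcongr
        _ = ε := tsub_add_cancel_of_le hspec.2.le
    exact lt_of_le_of_lt htri (lt_of_lt_of_le h1 h2)
  have heq : pickRoot f ε r x' = z := by
    have hspec' := pickRoot_spec (f := f) (hex x' hx's)
    exact huniq x' hx's _ z hspec'.1 hz hspec'.2 hzr
  rw [heq, dist_nndist]
  have : nndist z y₀ < δ.toNNReal := lt_of_lt_of_le (by rwa [nndist_eq_nnnorm]) (min_le_left _ _)
  calc (nndist z y₀ : ℝ) < (δ.toNNReal : ℝ) := NNReal.coe_lt_coe.mpr this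
    _ = δ := Real.coe_toNNReal δ hδ.le

end CurveCover

set_option maxHeartbeats 1000000 in
theorem curve_is_covering_away_from_critical_fibers
    (n : ℕ) (hn : 1 ≤ n) (f : Polynomial (Polynomial ℂ))
    (hmonic : f.Monic) (hdeg : f.natDegree = n) :
    IsCoveringMap
      (fun z : {z : ℂ × ℂ // curveEval f z.1 z.2 = 0 ∧ z.1 ∉ critValues f} =>
        (⟨(z : ℂ × ℂ).1, z.2.2⟩ : {x : ℂ // x ∉ critValues f})) := by
  classical
  intro b₀
  -- abbreviations
  set x₀ : ℂ := b₀.1 with hx₀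
  have hb2 : x₀ ∉ critValues f := b₀.2
  -- the fiber over b₀ is finite, hence discrete
  have hfin : ((fun z : {z : ℂ × ℂ // curveEval f z.1 z.2 = 0 ∧ z.1 ∉ critValues f} =>
      (⟨(z : ℂ × ℂ).1, z.2.2⟩ : {x : ℂ // x ∉ critValues f})) ⁻¹' {b₀}).Finite := by
    apply Set.Finite.of_finite_image
      (f := fun z : {z : ℂ × ℂ // curveEval f z.1 z.2 = 0 ∧ z.1 ∉ critValues f} => (z : ℂ × ℂ).2)
    · apply Set.Finite.subset
        (Polynomial.finite_setOf_isRoot ((CurveCover.monic_fiber f hmonic x₀).ne_zero))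
      rintro y ⟨z, hz, rfl⟩
      have hx : (z : ℂ × ℂ).1 = x₀ := congrArg Subtype.val hz
      show ((f.map (evalRingHom x₀))).IsRoot (z : ℂ × ℂ).2
      have := z.2.1
      rw [hx] at this
      exact this
    · intro z hz z' hz' hyy
      have hx : (z : ℂ × ℂ).1 = x₀ := congrArg Subtype.val hz
      have hx' : (z' : ℂ × ℂ).1 = x₀ := congrArg Subtype.val hz'
      exact Subtype.ext (Prod.ext (hx.trans hx'.symm) hyy)
  haveI hdisc := hfin.to_subtype
  suffices hT : ∃ t : Bundle.Trivialization ↥((fun z : {z : ℂ × ℂ // curveEval f z.1 z.2 = 0 ∧ z.1 ∉ critValues f} =>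
        (⟨(z : ℂ × ℂ).1, z.2.2⟩ : {x : ℂ // x ∉ critValues f})) ⁻¹' {b₀})
      (fun z : {z : ℂ × ℂ // curveEval f z.1 z.2 = 0 ∧ z.1 ∉ critValues f} =>
        (⟨(z : ℂ × ℂ).1, z.2.2⟩ : {x : ℂ // x ∉ critValues f})), b₀ ∈ t.baseSet from
    IsEvenlyCovered.of_trivialization hT.choose_spec
  -- roots of the fiber polynomial over x₀
  set R : Finset ℂ := (f.map (evalRingHom x₀)).roots.toFinset with hRdef
  have hRcard : R.card = n := by
    rw [hRdef, Multiset.toFinset_card_of_nodup (CurveCover.roots_nodup f hmonic hb2),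
      CurveCover.card_roots_fiber f hmonic, hdeg]
  have hRroot : ∀ r ∈ R, curveEval f x₀ r = 0 := by
    intro r hr
    rw [hRdef, Multiset.mem_toFinset, mem_roots'] at hr
    exact hr.2
  have hRmem : ∀ y, curveEval f x₀ y = 0 → y ∈ R := by
    intro y hy
    rw [hRdef, Multiset.mem_toFinset, mem_roots']
    exact ⟨(CurveCover.monic_fiber f hmonic x₀).ne_zero, hy⟩
  obtain ⟨ε, hε, hsepR⟩ := CurveCover.exists_sep R
  have hsep : ∀ y r r', r ∈ R → r' ∈ R → ‖y - r‖₊ < ε → ‖y - r'‖₊ < ε → r = r' := by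
    intro y r r' hr hr' h1 h2
    by_contra hne
    have h3 := hsepR r hr r' hr' hne
    have hlt : ‖r - r'‖₊ < 2 * ε := by
      have htri : ‖r - r'‖₊ ≤ ‖r - y‖₊ + ‖y - r'‖₊ := by
        simpa [← nndist_eq_nnnorm] using nndist_triangle r y r'
      have h1' : ‖r - y‖₊ < ε := by rwa [← neg_sub, nnnorm_neg]
      calc ‖r - r'‖₊ ≤ ‖r - y‖₊ + ‖y - r'‖₊ := htri
        _ < ε + ε := by gcongr
        _ = 2 * ε := (two_mul ε).symm
    exact absurd h3 (not_le.mpr hlt)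
  -- the good neighbourhood
  set U : Set ℂ := {x | ∀ r ∈ R, ‖curveEval f x r‖₊ < ε ^ n} with hUdef
  have hUopen : IsOpen U := by
    have hU2 : U = ⋂ r ∈ R, {x | ‖curveEval f x r‖₊ < ε ^ n} := by
      ext x; simp [hUdef]
    rw [hU2]
    refine isOpen_biInter_finset fun r _ => ?_
    have hc : Continuous fun x => ‖curveEval f x r‖₊ :=
      ((CurveCover.continuous_curveEval (f := f)).comp
        (continuous_id.prodMk continuous_const)).nnnorm
    exact isOpen_lt hc continuous_const
  have hcfst : Continuous
      (fun z' : {z : ℂ × ℂ // curveEval f z.1 z.2 = 0 ∧ z.1 ∉ critValues f} =>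
        (z' : ℂ × ℂ).1) := continuous_fst.comp continuous_subtype_val
  have hcsnd : Continuous
      (fun z' : {z : ℂ × ℂ // curveEval f z.1 z.2 = 0 ∧ z.1 ∉ critValues f} =>
        (z' : ℂ × ℂ).2) := continuous_snd.comp continuous_subtype_val
  have hx₀U : x₀ ∈ U := by
    intro r hr
    rw [hRroot r hr]
    simpa using pow_pos hε n
  have hkey : ∀ x ∈ U, x ∉ critValues f →
      (∀ y, curveEval f x y = 0 → ∃ r ∈ R, ‖y - r‖₊ < ε) ∧
      (∀ r ∈ R, ∀ y y', curveEval f x y = 0 → curveEval f x y' = 0 →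
        ‖y - r‖₊ < ε → ‖y' - r‖₊ < ε → y = y') := fun x hxU hxc =>
    CurveCover.key_count f hmonic hdeg hxc hRcard hsep hxU
  have hhex : ∀ x ∈ U, ∀ r ∈ R, ∃ y, curveEval f x y = 0 ∧ ‖y - r‖₊ < ε := fun x hxU r hr =>
    CurveCover.exists_root_near f hmonic hdeg x (hxU r hr)
  -- basic data for the trivialization
  obtain ⟨r₀, hr₀⟩ : R.Nonempty := Finset.card_pos.mp (by rw [hRcard]; omega)
  set Fib := (fun z : {z : ℂ × ℂ // curveEval f z.1 z.2 = 0 ∧ z.1 ∉ critValues f} =>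
      (⟨(z : ℂ × ℂ).1, z.2.2⟩ : {x : ℂ // x ∉ critValues f})) ⁻¹' {b₀} with hFibdef
  set fib : ℂ → ↥Fib := fun r =>
    if h : r ∈ R then ⟨⟨(x₀, r), hRroot r h, hb2⟩, Subtype.ext hx₀⟩
    else ⟨⟨(x₀, r₀), hRroot r₀ hr₀, hb2⟩, Subtype.ext hx₀⟩ with hfibdef
  have hfibval : ∀ r ∈ R, ((fib r).1 : ℂ × ℂ) = (x₀, r) := by
    intro r hr
    rw [hfibdef]
    dsimp only
    rw [dif_pos hr]
  have hwx : ∀ w : ↥Fib, (w.1 : ℂ × ℂ).1 = x₀ := by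
    intro w
    have h2 : (⟨(w.1 : ℂ × ℂ).1, w.1.2.2⟩ : {x : ℂ // x ∉ critValues f}) = b₀ := w.2
    have h3 := congrArg Subtype.val h2
    rw [← hx₀] at h3
    exact h3
  have hwR : ∀ w : ↥Fib, (w.1 : ℂ × ℂ).2 ∈ R := by
    intro w
    apply hRmem
    have h0 := (w.1).2.1
    rw [hwx w] at h0
    exact h0
  have hfib_eq : ∀ w : ↥Fib, fib ((w.1 : ℂ × ℂ).2) = w := by
    intro w
    rw [hfibdef]
    dsimp only
    rw [dif_pos (hwR w)]
    exact Subtype.ext (Subtype.ext (Prod.ext (hwx w).symm rfl))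
  set S : {x : ℂ // x ∉ critValues f} × ↥Fib →
      {z : ℂ × ℂ // curveEval f z.1 z.2 = 0 ∧ z.1 ∉ critValues f} := fun bw =>
    if h : (bw.1 : ℂ) ∈ U then
      ⟨((bw.1 : ℂ), CurveCover.pickRoot f ε ((bw.2.1 : ℂ × ℂ)).2 (bw.1 : ℂ)),
        (CurveCover.pickRoot_spec f (hhex _ h _ (hwR bw.2))).1, bw.1.2⟩
    else (bw.2 : _) with hSdef
  have hSval : ∀ bw, (h : (bw.1 : ℂ) ∈ U) →
      ((S bw).1 : ℂ × ℂ) =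
        ((bw.1 : ℂ), CurveCover.pickRoot f ε ((bw.2.1 : ℂ × ℂ)).2 (bw.1 : ℂ)) := by
    intro bw h
    rw [hSdef]
    dsimp only
    rw [dif_pos h]
  refine ⟨{
    toOpenPartialHomeomorph := {
      toPartialEquiv := {
        toFun := fun z => (⟨(z : ℂ × ℂ).1, z.2.2⟩,
          fib (CurveCover.nearRoot R ε ((z : ℂ × ℂ)).2)),
        invFun := S,
        source := {z | (z : ℂ × ℂ).1 ∈ U},
        target := {b : {x : ℂ // x ∉ critValues f} | (b : ℂ) ∈ U} ×ˢ Set.univ,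
        map_source' := fun z hz => ⟨hz, Set.mem_univ _⟩,
        map_target' := ?_,
        left_inv' := ?_,
        right_inv' := ?_ },
      open_source := hUopen.preimage (continuous_fst.comp continuous_subtype_val),
      open_target := (hUopen.preimage continuous_subtype_val).prod isOpen_univ,
      continuousOn_toFun := ?_,
      continuousOn_invFun := ?_ },
    baseSet := {b : {x : ℂ // x ∉ critValues f} | (b : ℂ) ∈ U},
    open_baseSet := hUopen.preimage continuous_subtype_val,
    source_eq := rfl,
    target_eq := rfl,
    proj_toFun := fun z _ => rfl }, ?_⟩
  · -- map_target'
    intro bw hbw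
    have h1 : (bw.1 : ℂ) ∈ U := hbw.1
    show ((S bw).1 : ℂ × ℂ).1 ∈ U
    rw [hSval bw h1]
    exact h1
  · -- left_inv'
    intro z hz
    have hzc := z.2.1
    have hzcrit := z.2.2
    obtain ⟨r, hrR, hrn⟩ := (hkey _ hz hzcrit).1 _ hzc
    have hnspec := CurveCover.nearRoot_spec ⟨r, hrR, hrn⟩
    have h5 : ((fib (CurveCover.nearRoot R ε ((z : ℂ × ℂ)).2)).1 : ℂ × ℂ).2
        = CurveCover.nearRoot R ε ((z : ℂ × ℂ)).2 := by
      rw [hfibval _ hnspec.1]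
    apply Subtype.ext
    rw [hSval (⟨⟨(z : ℂ × ℂ).1, z.2.2⟩, fib (CurveCover.nearRoot R ε ((z : ℂ × ℂ)).2)⟩) hz]
    dsimp only
    rw [h5]
    have hpspec := CurveCover.pickRoot_spec f
      (hhex _ hz _ hnspec.1)
    refine Prod.ext rfl ?_
    exact (hkey _ hz hzcrit).2 _ hnspec.1 _ _ hpspec.1 hzc hpspec.2 hnspec.2
  · -- right_inv'
    intro bw hbw
    have h1 : (bw.1 : ℂ) ∈ U := hbw.1
    have hrR := hwR bw.2
    have hpspec := CurveCover.pickRoot_spec f (hhex _ h1 _ hrR)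
    have hv1 : ((S bw).1 : ℂ × ℂ).1 = (bw.1 : ℂ) := by rw [hSval bw h1]
    have hv2 : ((S bw).1 : ℂ × ℂ).2
        = CurveCover.pickRoot f ε ((bw.2.1 : ℂ × ℂ)).2 (bw.1 : ℂ) := by rw [hSval bw h1]
    refine Prod.ext (Subtype.ext ?_) ?_
    · exact hv1
    · show fib (CurveCover.nearRoot R ε ((S bw).1 : ℂ × ℂ).2) = bw.2
      rw [hv2]
      have hnspec := CurveCover.nearRoot_spec ⟨_, hrR, hpspec.2⟩
      have : CurveCover.nearRoot R ε
          (CurveCover.pickRoot f ε ((bw.2.1 : ℂ × ℂ)).2 (bw.1 : ℂ))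
          = (bw.2.1 : ℂ × ℂ).2 :=
        hsep _ _ _ hnspec.1 hrR hnspec.2 hpspec.2
      rw [this]
      exact hfib_eq bw.2
  · -- continuousOn_toFun
    apply ContinuousOn.prodMk
    · refine Continuous.continuousOn ?_
      refine Continuous.subtype_mk ?_ _
      exact continuous_fst.comp continuous_subtype_val
    · intro z hz
      have hzc := z.2.1
      have hzcrit := z.2.2
      obtain ⟨r, hrR, hrn⟩ := (hkey _ hz hzcrit).1 _ hzc
      have hnspec := CurveCover.nearRoot_spec ⟨r, hrR, hrn⟩
      have hNopen : IsOpen {z' : {z : ℂ × ℂ // curveEval f z.1 z.2 = 0 ∧ z.1 ∉ critValues f} |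
          (z' : ℂ × ℂ).1 ∈ U ∧
            ‖(z' : ℂ × ℂ).2 - CurveCover.nearRoot R ε ((z : ℂ × ℂ)).2‖₊ < ε} := by
        apply IsOpen.inter
        · exact hUopen.preimage hcfst
        · refine isOpen_lt ?_ continuous_const
          exact Continuous.comp NNReal.continuous_coe ((hcsnd.sub continuous_const).nnnorm)
      refine (ContinuousAt.congr (continuousAt_const
        (y := fib (CurveCover.nearRoot R ε ((z : ℂ × ℂ)).2))) ?_).continuousWithinAt
      filter_upwards [hNopen.mem_nhds ⟨hz, hnspec.2⟩] with z' hz'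
      have hz'c := z'.2.1
      obtain ⟨r', hr'R, hr'⟩ := (hkey _ hz'.1 z'.2.2).1 _ hz'c
      have hnspec' := CurveCover.nearRoot_spec ⟨r', hr'R, hr'⟩
      have heq : CurveCover.nearRoot R ε ((z' : ℂ × ℂ)).2
          = CurveCover.nearRoot R ε ((z : ℂ × ℂ)).2 :=
        hsep _ _ _ hnspec'.1 hnspec.1 hnspec'.2 hz'.2
      rw [heq]
  · -- continuousOn_invFun
    intro bw hbw
    have h1 : (bw.1 : ℂ) ∈ U := hbw.1
    have hrR := hwR bw.2
    have hNmem : ({b : {x : ℂ // x ∉ critValues f} | (b : ℂ) ∈ U} ×ˢ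
        ({bw.2} : Set ↥Fib)) ∈ nhds bw := by
      apply IsOpen.mem_nhds
      · exact (hUopen.preimage continuous_subtype_val).prod (isOpen_discrete _)
      · exact ⟨h1, rfl⟩
    rw [← continuousWithinAt_inter hNmem]
    rw [Topology.IsEmbedding.subtypeVal.isInducing.continuousWithinAt_iff]
    have hsub : Set.MapsTo (fun bw' : {x : ℂ // x ∉ critValues f} × ↥Fib => (bw'.1 : ℂ))
        (({b : {x : ℂ // x ∉ critValues f} | (b : ℂ) ∈ U} ×ˢ Set.univ) ∩
          ({b : {x : ℂ // x ∉ critValues f} | (b : ℂ) ∈ U} ×ˢ ({bw.2} : Set ↥Fib)))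
        (U ∩ {x : ℂ | x ∉ critValues f}) := by
      intro bw' hbw'
      exact ⟨hbw'.1.1, bw'.1.2⟩
    have hpkcwa : ContinuousWithinAt (CurveCover.pickRoot f ε ((bw.2.1 : ℂ × ℂ)).2)
        (U ∩ {x : ℂ | x ∉ critValues f}) (bw.1 : ℂ) := by
      apply CurveCover.pickRoot_continuousWithinAt f hmonic hdeg
      · intro x hx
        exact (hkey x hx.1 hx.2).2 _ hrR
      · intro x hx
        exact hhex x hx.1 _ hrR
      · exact ⟨h1, bw.1.2⟩
    refine ContinuousWithinAt.congr
      (f := fun bw' : {x : ℂ // x ∉ critValues f} × ↥Fib =>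
        (((bw'.1 : ℂ), CurveCover.pickRoot f ε ((bw.2.1 : ℂ × ℂ)).2 (bw'.1 : ℂ)) : ℂ × ℂ))
      ?_ ?_ ?_
    · refine ContinuousWithinAt.prodMk
        ((continuous_subtype_val.comp continuous_fst).continuousWithinAt) ?_
      have hc1 : ContinuousWithinAt
          (fun bw' : {x : ℂ // x ∉ critValues f} × ↥Fib => (bw'.1 : ℂ))
          (({b : {x : ℂ // x ∉ critValues f} | (b : ℂ) ∈ U} ×ˢ Set.univ) ∩
            ({b : {x : ℂ // x ∉ critValues f} | (b : ℂ) ∈ U} ×ˢ ({bw.2} : Set ↥Fib))) bw :=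
        (continuous_subtype_val.comp continuous_fst).continuousWithinAt
      exact ContinuousWithinAt.comp (g := CurveCover.pickRoot f ε ((bw.2.1 : ℂ × ℂ)).2)
        (f := fun bw' : {x : ℂ // x ∉ critValues f} × ↥Fib => (bw'.1 : ℂ)) hpkcwa hc1 hsub
    · intro bw' hbw'
      have h2 : bw'.2 = bw.2 := hbw'.2.2
      have h1' : (bw'.1 : ℂ) ∈ U := hbw'.1.1
      show ((S bw').1 : ℂ × ℂ) = _
      rw [hSval bw' h1', h2]
    · show ((S bw).1 : ℂ × ℂ) = _
      rw [hSval bw h1]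
  · -- b₀ ∈ baseSet
    show (b₀ : ℂ) ∈ U
    rw [← hx₀]
    exact hx₀U
end

section
/- Let η and R be real numbers with 0 < η < R². Then the subset {(x,y,v) ∈ ℝ³ : -η ≤ x² - y² - v² ≤ η and x² + y² + v² ≤ R²} of ℝ³ is homeomorphic to the closed unit ball in ℝ³. (The region N₂′ between the two hyperboloids, within a large ball, is a 3-ball; this is the intermediate claim in the proof that N₂ is a 4-ball.) -/
open Metric Set Filter

/-- A continuous, positively homogeneous gauge `g` with two-sided linear bounds
gives a self-homeomorphism of the space which rescales norms to `g`. -/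
theorem gauge_radial_homeo {E : Type*} [NormedAddCommGroup E] [NormedSpace ℝ E]
    (g : E → ℝ) (hg : Continuous g)
    (hhom : ∀ (c : ℝ), 0 ≤ c → ∀ p, g (c • p) = c * g p)
    (C : ℝ) (hub : ∀ p, g p ≤ C * ‖p‖)
    (R : ℝ) (hR : 0 < R) (hlb : ∀ p, ‖p‖ ≤ R * g p) :
    ∃ h : E ≃ₜ E, (∀ p, ‖h p‖ = g p) ∧ (∀ q, g (h.symm q) = ‖q‖) := by
  classical
  have hg0 : ∀ p, 0 ≤ g p := fun p => by nlinarith [norm_nonneg p, hlb p]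
  have hgpos : ∀ p : E, p ≠ 0 → 0 < g p := fun p hp => by
    have h1 : 0 < ‖p‖ := norm_pos_iff.2 hp
    nlinarith [hlb p]
  set F : E → E := fun p => if p = 0 then 0 else (g p / ‖p‖) • p with hF
  set G : E → E := fun q => if q = 0 then 0 else (‖q‖ / g q) • q with hG
  have hFval : ∀ p : E, p ≠ 0 → F p = (g p / ‖p‖) • p := fun p hp => by
    simp [hF, hp]
  have hGval : ∀ q : E, q ≠ 0 → G q = (‖q‖ / g q) • q := fun q hq => by
    simp [hG, hq]
  have hFne : ∀ p : E, p ≠ 0 → F p ≠ 0 := fun p hp => by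
    rw [hFval p hp]
    exact smul_ne_zero (div_pos (hgpos p hp) (norm_pos_iff.2 hp)).ne' hp
  have hGne : ∀ q : E, q ≠ 0 → G q ≠ 0 := fun q hq => by
    rw [hGval q hq]
    exact smul_ne_zero (div_pos (norm_pos_iff.2 hq) (hgpos q hq)).ne' hq
  have hnormF : ∀ p : E, ‖F p‖ = g p := by
    intro p
    rcases eq_or_ne p 0 with rfl | hp
    · have : g (0 : E) = 0 := by
        have := hhom 0 le_rfl 0
        simpa using this
      simp [hF, this]
    · rw [hFval p hp, norm_smul, Real.norm_eq_abs,
        abs_of_nonneg (div_nonneg (hg0 p) (norm_nonneg p)),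
        div_mul_cancel₀ _ (norm_ne_zero_iff.2 hp)]
  have hgF : ∀ p : E, p ≠ 0 → g (F p) = g p * g p / ‖p‖ := by
    intro p hp
    rw [hFval p hp, hhom _ (div_nonneg (hg0 p) (norm_nonneg p)) p]
    ring
  have hgG : ∀ q : E, g (G q) = ‖q‖ := by
    intro q
    rcases eq_or_ne q 0 with rfl | hq
    · have := hhom 0 le_rfl 0
      simp at this
      simp [hG, this]
    · rw [hGval q hq, hhom _ (div_nonneg (norm_nonneg q) (hg0 q)) q,
        div_mul_eq_mul_div, mul_div_assoc, div_self (hgpos q hq).ne', mul_one]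
  have hnormG : ∀ q : E, ‖G q‖ = ‖q‖ * ‖q‖ / g q := by
    intro q
    rcases eq_or_ne q 0 with rfl | hq
    · simp [hG]
    · rw [hGval q hq, norm_smul, Real.norm_eq_abs,
        abs_of_nonneg (div_nonneg (norm_nonneg q) (hg0 q))]
      ring
  have hleft : Function.LeftInverse G F := by
    intro p
    rcases eq_or_ne p 0 with rfl | hp
    · simp [hF, hG]
    · have hFp := hFne p hp
      rw [hGval _ hFp, hnormF p, hgF p hp, hFval p hp, smul_smul]
      have h1 : g p ≠ 0 := (hgpos p hp).ne'
      have h2 : ‖p‖ ≠ 0 := norm_ne_zero_iff.2 hp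
      have : g p / (g p * g p / ‖p‖) * (g p / ‖p‖) = 1 := by field_simp
      rw [this, one_smul]
  have hright : Function.RightInverse G F := by
    intro q
    rcases eq_or_ne q 0 with rfl | hq
    · simp [hF, hG]
    · have hGq := hGne q hq
      rw [hFval _ hGq, hgG q, hnormG q, hGval q hq, smul_smul]
      have h1 : g q ≠ 0 := (hgpos q hq).ne'
      have h2 : ‖q‖ ≠ 0 := norm_ne_zero_iff.2 hq
      have : ‖q‖ / (‖q‖ * ‖q‖ / g q) * (‖q‖ / g q) = 1 := by field_simp
      rw [this, one_smul]
  have hFcont : Continuous F := by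
    rw [continuous_iff_continuousAt]
    intro p
    rcases eq_or_ne p 0 with rfl | hp
    · have hF0 : F 0 = 0 := by simp [hF]
      rw [ContinuousAt, hF0]
      apply squeeze_zero_norm (a := fun p : E => (max C 0) * ‖p‖)
      · intro x
        rw [hnormF x]
        calc g x ≤ C * ‖x‖ := hub x
          _ ≤ max C 0 * ‖x‖ := by
            apply mul_le_mul_of_nonneg_right (le_max_left _ _) (norm_nonneg _)
      · have := (continuous_const.mul continuous_norm :
          Continuous fun p : E => (max C 0) * ‖p‖)
        convert this.tendsto (0 : E) using 2 <;> simp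
    · have h1 : ContinuousAt (fun p : E => (g p / ‖p‖) • p) p := by
        exact ((hg.continuousAt.div continuous_norm.continuousAt
          (norm_ne_zero_iff.2 hp)).smul continuousAt_id)
      apply h1.congr
      filter_upwards [eventually_ne_nhds hp] with x hx
      simp [hF, hx]
  have hGcont : Continuous G := by
    rw [continuous_iff_continuousAt]
    intro q
    rcases eq_or_ne q 0 with rfl | hq
    · have hG0 : G 0 = 0 := by simp [hG]
      rw [ContinuousAt, hG0]
      apply squeeze_zero_norm (a := fun q : E => R * ‖q‖)
      · intro x
        rw [hnormG x]
        rcases eq_or_ne x 0 with rfl | hx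
        · simp
        · rw [div_le_iff₀ (hgpos x hx)]
          have := hlb x
          nlinarith [norm_nonneg x, hg0 x]
      · have := (continuous_const.mul continuous_norm :
          Continuous fun q : E => R * ‖q‖)
        convert this.tendsto (0 : E) using 2 <;> simp
    · have h1 : ContinuousAt (fun q : E => (‖q‖ / g q) • q) q := by
        exact ((continuous_norm.continuousAt.div hg.continuousAt
          (hgpos q hq).ne').smul continuousAt_id)
      apply h1.congr
      filter_upwards [eventually_ne_nhds hq] with x hx
      simp [hG, hx]
  refine ⟨⟨⟨F, G, hleft, hright⟩, hFcont, hGcont⟩, fun p => hnormF p, fun q => hgG q⟩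

theorem region_between_hyperboloids_is_three_ball
    (η R : ℝ) (hη : 0 < η) (hηR : η < R ^ 2) :
    Nonempty
      (({p : EuclideanSpace ℝ (Fin 3) |
            -η ≤ p 0 ^ 2 - p 1 ^ 2 - p 2 ^ 2 ∧
            p 0 ^ 2 - p 1 ^ 2 - p 2 ^ 2 ≤ η ∧
            p 0 ^ 2 + p 1 ^ 2 + p 2 ^ 2 ≤ R ^ 2} : Set (EuclideanSpace ℝ (Fin 3))) ≃ₜ
        (Metric.closedBall (0 : EuclideanSpace ℝ (Fin 3)) 1 :
          Set (EuclideanSpace ℝ (Fin 3)))) := by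
  have hR2 : (0 : ℝ) < R ^ 2 := hη.trans hηR
  set f : EuclideanSpace ℝ (Fin 3) → ℝ := fun p => p 0 ^ 2 - p 1 ^ 2 - p 2 ^ 2 with hf
  set q : EuclideanSpace ℝ (Fin 3) → ℝ := fun p => p 0 ^ 2 + p 1 ^ 2 + p 2 ^ 2 with hq
  set g : EuclideanSpace ℝ (Fin 3) → ℝ :=
    fun p => Real.sqrt (max (|f p| / η) (q p / R ^ 2)) with hgdef
  have happ : ∀ i : Fin 3, Continuous fun p : EuclideanSpace ℝ (Fin 3) => p i :=
    fun i => (EuclideanSpace.proj i).continuous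
  have hnormsq : ∀ p : EuclideanSpace ℝ (Fin 3), ‖p‖ ^ 2 = q p := by
    intro p
    rw [EuclideanSpace.norm_eq, Real.sq_sqrt (by positivity)]
    simp [hq, Fin.sum_univ_three, Real.norm_eq_abs, sq_abs]
  have hfq : ∀ p, |f p| ≤ q p := by
    intro p
    rw [abs_le]
    constructor <;> simp only [hf, hq] <;> nlinarith [sq_nonneg (p 0), sq_nonneg (p 1), sq_nonneg (p 2)]
  have hqnn : ∀ p, 0 ≤ q p := fun p => by simp only [hq]; positivity
  have hgc : Continuous g := by
    apply Real.continuous_sqrt.comp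
    apply Continuous.max
    · exact (((((happ 0).pow 2).sub ((happ 1).pow 2)).sub ((happ 2).pow 2)).abs).div_const η
    · exact ((((happ 0).pow 2).add ((happ 1).pow 2)).add ((happ 2).pow 2)).div_const (R ^ 2)
  have hhom : ∀ (c : ℝ), 0 ≤ c → ∀ p, g (c • p) = c * g p := by
    intro c hc p
    have hsmul : ∀ i : Fin 3, (c • p) i = c * p i := fun i => rfl
    have hfs : f (c • p) = c ^ 2 * f p := by simp only [hf, hsmul]; ring
    have hqs : q (c • p) = c ^ 2 * q p := by simp only [hq, hsmul]; ring
    simp only [hgdef, hfs, hqs, abs_mul, abs_of_nonneg (sq_nonneg c)]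
    rw [mul_div_assoc, mul_div_assoc, ← mul_max_of_nonneg _ _ (sq_nonneg c),
      Real.sqrt_mul (sq_nonneg c), Real.sqrt_sq hc]
  have hub : ∀ p, g p ≤ Real.sqrt (max (1 / η) (1 / R ^ 2)) * ‖p‖ := by
    intro p
    have h1 : max (|f p| / η) (q p / R ^ 2) ≤ max (1 / η) (1 / R ^ 2) * ‖p‖ ^ 2 := by
      rw [hnormsq p]
      apply max_le
      · calc |f p| / η ≤ q p / η := by
              gcongr
              exact hfq p
        _ = (1 / η) * q p := by ring
        _ ≤ max (1 / η) (1 / R ^ 2) * q p :=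
              mul_le_mul_of_nonneg_right (le_max_left _ _) (hqnn p)
      · calc q p / R ^ 2 = (1 / R ^ 2) * q p := by ring
          _ ≤ max (1 / η) (1 / R ^ 2) * q p :=
              mul_le_mul_of_nonneg_right (le_max_right _ _) (hqnn p)
    calc g p ≤ Real.sqrt (max (1 / η) (1 / R ^ 2) * ‖p‖ ^ 2) := Real.sqrt_le_sqrt h1
      _ = Real.sqrt (max (1 / η) (1 / R ^ 2)) * ‖p‖ := by
          rw [Real.sqrt_mul (le_max_of_le_right (by positivity)), Real.sqrt_sq (norm_nonneg p)]
  have hlb : ∀ p : EuclideanSpace ℝ (Fin 3), ‖p‖ ≤ Real.sqrt (R ^ 2) * g p := by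
    intro p
    have h1 : ‖p‖ ^ 2 / R ^ 2 ≤ max (|f p| / η) (q p / R ^ 2) := by
      rw [hnormsq p]; exact le_max_right _ _
    have h2 : Real.sqrt (‖p‖ ^ 2 / R ^ 2) ≤ g p := Real.sqrt_le_sqrt h1
    rw [Real.sqrt_div (sq_nonneg _), Real.sqrt_sq (norm_nonneg p),
      div_le_iff₀ (Real.sqrt_pos.2 hR2)] at h2
    linarith [h2]
  obtain ⟨h, hhp, hhq⟩ := gauge_radial_homeo g hgc hhom _ hub _
    (Real.sqrt_pos.2 hR2) hlb
  have hSeq : {p : EuclideanSpace ℝ (Fin 3) |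
      -η ≤ p 0 ^ 2 - p 1 ^ 2 - p 2 ^ 2 ∧
      p 0 ^ 2 - p 1 ^ 2 - p 2 ^ 2 ≤ η ∧
      p 0 ^ 2 + p 1 ^ 2 + p 2 ^ 2 ≤ R ^ 2} = {p | g p ≤ 1} := by
    ext p
    simp only [mem_setOf_eq, hgdef]
    rw [Real.sqrt_le_one]
    rw [max_le_iff, div_le_one hη, div_le_one hR2, abs_le]
    simp only [hf, hq]
    tauto
  have himg : h '' {p | g p ≤ 1} = Metric.closedBall (0 : EuclideanSpace ℝ (Fin 3)) 1 := by
    rw [← Homeomorph.preimage_symm]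
    ext x
    simp only [mem_preimage, mem_setOf_eq, mem_closedBall_zero_iff]
    show g (h.symm x) ≤ 1 ↔ _
    rw [hhq x]
  exact ⟨(Homeomorph.setCongr hSeq).trans ((h.image _).trans (Homeomorph.setCongr himg))⟩
end

section
/- Let η and R be real numbers with 0 < η < R². Then the subset N₂ = {(x,y,r,v) ∈ ℝ⁴ : -η ≤ x² - y² - v² ≤ r ≤ η and x² + y² + v² ≤ R²} of ℝ⁴ is homeomorphic to the closed unit ball in ℝ⁴. (The piece N₂ attached near an indefinite fold of the boundary map is a 4-ball, so attaching it is attaching a 2-handle; this is the Proposition 'N₂ is diffeomorphic to a 4-ball', in topological form and with the implicit bound near the critical point made explicit.) -/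
noncomputable section
namespace N2B

open Real Metric Set

abbrev E4 := EuclideanSpace ℝ (Fin 4)

def mk4 (a b c d : ℝ) : E4 := WithLp.toLp 2 ![a,b,c,d]

/-- gauge of the handle region, centered at (0,0,η/2,0), in coords (u,w,m). -/
def gK (η R2 u w m : ℝ) : ℝ :=
  max (max (u / R2) (-w / η)) (max ((w + m) * (2 / η)) ((-m) * (2 / η)))

/-- gauge of the cylinder, in coords (u,m). -/
def gC (η R2 u m : ℝ) : ℝ := max (u / R2) (|m| * (2 / η))

variable {η R2 : ℝ}

lemma gK_nonneg (hη : 0 < η) (u w m : ℝ) : 0 ≤ gK η R2 u w m := by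
  unfold gK
  rcases le_total 0 w with h | h
  · rcases le_total 0 m with h2 | h2
    · have : (0:ℝ) ≤ (w + m) * (2/η) := by positivity
      exact le_trans this (le_trans (le_max_left _ _) (le_max_right _ _))
    · have : (0:ℝ) ≤ (-m) * (2/η) := by
        have : (0:ℝ) ≤ -m := by linarith
        positivity
      exact le_trans this (le_trans (le_max_right _ _) (le_max_right _ _))
  · have : (0:ℝ) ≤ -w / η := by
      have : (0:ℝ) ≤ -w := by linarith
      positivity
    exact le_trans this (le_trans (le_max_right _ _) (le_max_left _ _))

lemma gC_nonneg (hη : 0 < η) (u m : ℝ) : 0 ≤ gC η R2 u m := by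
  unfold gC
  have : (0:ℝ) ≤ |m| * (2/η) := by positivity
  exact le_trans this (le_max_right _ _)

lemma gK_smul (u w m : ℝ) {c : ℝ} (hc : 0 ≤ c) :
    gK η R2 (c*u) (c*w) (c*m) = c * gK η R2 u w m := by
  unfold gK
  rw [mul_max_of_nonneg _ _ hc, mul_max_of_nonneg _ _ hc, mul_max_of_nonneg _ _ hc]
  congr 2 <;> ring

lemma gC_smul (u m : ℝ) {c : ℝ} (hc : 0 ≤ c) :
    gC η R2 (c*u) (c*m) = c * gC η R2 u m := by
  unfold gC
  rw [mul_max_of_nonneg _ _ hc, abs_mul, abs_of_nonneg hc]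
  congr 1 <;> ring

lemma gK_eq_zero (hη : 0 < η) (hR : 0 < R2) {u w m : ℝ} (hu : 0 ≤ u)
    (h : gK η R2 u w m ≤ 0) : u = 0 ∧ w = 0 ∧ m = 0 := by
  unfold gK at h
  simp only [max_le_iff] at h
  obtain ⟨⟨h1, h2⟩, h3, h4⟩ := h
  have e1 : u = (u / R2) * R2 := by field_simp
  have hu0 : u ≤ 0 := by nlinarith
  have hw0 : 0 ≤ w := by
    have e2 : -w = (-w / η) * η := by field_simp
    nlinarith
  have hm0 : 0 ≤ m := by
    have e3 : -m = ((-m) * (2/η)) * (η/2) := by field_simp <;> ring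
    nlinarith
  have hwm : w + m ≤ 0 := by
    have e4 : w + m = ((w + m) * (2/η)) * (η/2) := by field_simp <;> ring
    nlinarith
  refine ⟨le_antisymm hu0 hu, by linarith, by linarith⟩

lemma gC_eq_zero (hη : 0 < η) (hR : 0 < R2) {u m : ℝ} (hu : 0 ≤ u)
    (h : gC η R2 u m ≤ 0) : u = 0 ∧ m = 0 := by
  unfold gC at h
  simp only [max_le_iff] at h
  obtain ⟨h1, h2⟩ := h
  have e1 : u = (u / R2) * R2 := by field_simp
  have hu0 : u ≤ 0 := by nlinarith
  have hm : |m| ≤ 0 := by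
    have e2 : |m| = (|m| * (2/η)) * (η/2) := by field_simp <;> ring
    nlinarith
  exact ⟨le_antisymm hu0 hu, abs_nonpos_iff.mp hm⟩

/-- the key bound: gK ≤ C₀ · gC on the wedge |w| ≤ u. -/
lemma gK_le_gC (hη : 0 < η) (hR : 0 < R2) {u w m : ℝ} (hw : |w| ≤ u) :
    gK η R2 u w m ≤ (2*R2/η + 1) * gC η R2 u m := by
  have hu : 0 ≤ u := le_trans (abs_nonneg w) hw
  have hw1 : -w ≤ u := by rw [abs_le] at hw; linarith [hw.1]
  have hw2 : w ≤ u := (abs_le.mp hw).2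
  set g := gC η R2 u m with hgdef
  have hg : 0 ≤ g := gC_nonneg hη u m
  have hgu : u ≤ g * R2 := by
    have h : u / R2 ≤ g := by rw [hgdef]; exact le_max_left _ _
    calc u = (u / R2) * R2 := by field_simp
    _ ≤ g * R2 := mul_le_mul_of_nonneg_right h hR.le
  have hgm : |m| * 2 ≤ g * η := by
    have h : |m| * (2/η) ≤ g := by rw [hgdef]; exact le_max_right _ _
    calc |m| * 2 = (|m| * (2/η)) * η := by field_simp <;> ring
    _ ≤ g * η := mul_le_mul_of_nonneg_right h hη.le
  have hm1 : -m ≤ |m| := neg_le_abs m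
  have hm2 : m ≤ |m| := le_abs_self m
  have hkey : ((2*R2/η + 1) * g) * η = 2*R2*g + η*g := by field_simp
  have hgR : 0 ≤ g * R2 := mul_nonneg hg hR.le
  have hgη : 0 ≤ g * η := mul_nonneg hg hη.le
  unfold gK
  rw [max_le_iff, max_le_iff, max_le_iff]
  refine ⟨⟨?_, ?_⟩, ?_, ?_⟩
  · rw [div_le_iff₀ hR]
    have h2 : 0 ≤ (2*R2/η) * g * R2 := by positivity
    nlinarith [hgu]
  · rw [div_le_iff₀ hη, hkey]
    nlinarith
  · have e : (w + m) * (2/η) = (w + m) * 2 / η := by ring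
    rw [e, div_le_iff₀ hη, hkey]
    nlinarith
  · have e : (-m) * (2/η) = (-m) * 2 / η := by ring
    rw [e, div_le_iff₀ hη, hkey]
    nlinarith


section Maps

def uu (z : E4) : ℝ := z 0 ^ 2 + z 1 ^ 2 + z 3 ^ 2
def ww (z : E4) : ℝ := z 0 ^ 2 - z 1 ^ 2 - z 3 ^ 2
def ms (η : ℝ) (z : E4) : ℝ := z 2 - ww z - η / 2
def Mt (η : ℝ) (z : E4) : ℝ := z 2 - η / 2

variable (η R2 : ℝ)

def lam (z : E4) : ℝ := gK η R2 (uu z) (ww z) (ms η z) / gC η R2 (uu z) (ms η z)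
def mu (z : E4) : ℝ := gC η R2 (uu z) (Mt η z) / gK η R2 (uu z) (ww z) (Mt η z)

def F (z : E4) : E4 :=
  mk4 (√(lam η R2 z) * z 0) (√(lam η R2 z) * z 1)
      (η/2 + lam η R2 z * ms η z) (√(lam η R2 z) * z 3)

def G (z : E4) : E4 :=
  mk4 (√(mu η R2 z) * z 0) (√(mu η R2 z) * z 1)
      (η/2 + mu η R2 z * Mt η z + mu η R2 z * ww z) (√(mu η R2 z) * z 3)

variable {η R2}

@[simp] lemma F_apply0 (z : E4) : F η R2 z 0 = √(lam η R2 z) * z 0 := rfl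
@[simp] lemma F_apply1 (z : E4) : F η R2 z 1 = √(lam η R2 z) * z 1 := rfl
@[simp] lemma F_apply2 (z : E4) : F η R2 z 2 = η/2 + lam η R2 z * ms η z := rfl
@[simp] lemma F_apply3 (z : E4) : F η R2 z 3 = √(lam η R2 z) * z 3 := rfl
@[simp] lemma G_apply0 (z : E4) : G η R2 z 0 = √(mu η R2 z) * z 0 := rfl
@[simp] lemma G_apply1 (z : E4) : G η R2 z 1 = √(mu η R2 z) * z 1 := rfl
@[simp] lemma G_apply2 (z : E4) :
    G η R2 z 2 = η/2 + mu η R2 z * Mt η z + mu η R2 z * ww z := rfl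
@[simp] lemma G_apply3 (z : E4) : G η R2 z 3 = √(mu η R2 z) * z 3 := rfl

lemma uu_nonneg (z : E4) : 0 ≤ uu z := by unfold uu; positivity

lemma abs_ww_le (z : E4) : |ww z| ≤ uu z := by
  rw [abs_le]; unfold uu ww; constructor <;> nlinarith [sq_nonneg (z 0), sq_nonneg (z 1), sq_nonneg (z 3)]

lemma lam_nonneg (hη : 0 < η) (z : E4) : 0 ≤ lam η R2 z :=
  div_nonneg (gK_nonneg hη _ _ _) (gC_nonneg hη _ _)

lemma mu_nonneg (hη : 0 < η) (z : E4) : 0 ≤ mu η R2 z :=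
  div_nonneg (gC_nonneg hη _ _) (gK_nonneg hη _ _ _)

lemma lam_le (hη : 0 < η) (hR : 0 < R2) (z : E4) :
    lam η R2 z ≤ 2*R2/η + 1 := by
  rcases eq_or_lt_of_le (gC_nonneg hη (uu z) (ms η z)) with h | h
  · unfold lam; rw [← h, div_zero]; positivity
  · unfold lam; rw [div_le_iff₀ h]
    calc gK η R2 (uu z) (ww z) (ms η z) ≤ (2*R2/η + 1) * gC η R2 (uu z) (ms η z) :=
          gK_le_gC hη hR (abs_ww_le z)
    _ = _ := by ring

lemma uu_F (hη : 0 < η) (z : E4) : uu (F η R2 z) = lam η R2 z * uu z := by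
  unfold uu
  rw [F_apply0, F_apply1, F_apply3, mul_pow, mul_pow, mul_pow,
    sq_sqrt (lam_nonneg hη z)]
  ring

lemma ww_F (hη : 0 < η) (z : E4) : ww (F η R2 z) = lam η R2 z * ww z := by
  unfold ww
  rw [F_apply0, F_apply1, F_apply3, mul_pow, mul_pow, mul_pow,
    sq_sqrt (lam_nonneg hη z)]
  ring

lemma Mt_F (z : E4) : Mt η (F η R2 z) = lam η R2 z * ms η z := by
  unfold Mt; rw [F_apply2]; ring

lemma uu_G (hη : 0 < η) (z : E4) : uu (G η R2 z) = mu η R2 z * uu z := by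
  unfold uu
  rw [G_apply0, G_apply1, G_apply3, mul_pow, mul_pow, mul_pow,
    sq_sqrt (mu_nonneg hη z)]
  ring

lemma ww_G (hη : 0 < η) (z : E4) : ww (G η R2 z) = mu η R2 z * ww z := by
  unfold ww
  rw [G_apply0, G_apply1, G_apply3, mul_pow, mul_pow, mul_pow,
    sq_sqrt (mu_nonneg hη z)]
  ring

lemma ms_G (hη : 0 < η) (z : E4) : ms η (G η R2 z) = mu η R2 z * Mt η z := by
  unfold ms; rw [G_apply2, ww_G hη]; ring

end Maps

section Inverse

variable {η R2 : ℝ}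

lemma gK_zero_zero : gK η R2 0 0 0 = 0 := by unfold gK; simp

lemma gC_zero_zero : gC η R2 0 0 = 0 := by unfold gC; simp

lemma coords_of_uu_zero {z : E4} (h : uu z = 0) : z 0 = 0 ∧ z 1 = 0 ∧ z 3 = 0 := by
  unfold uu at h
  refine ⟨?_, ?_, ?_⟩ <;>
    [skip; skip; skip] <;>
    [ (have := sq_nonneg (z 1); have := sq_nonneg (z 3); nlinarith [sq_nonneg (z 0), sq_abs (z 0)]);
      (nlinarith [sq_nonneg (z 0), sq_nonneg (z 1), sq_nonneg (z 3)]);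
      (nlinarith [sq_nonneg (z 0), sq_nonneg (z 1), sq_nonneg (z 3)])]

lemma G_F (hη : 0 < η) (hR : 0 < R2) (z : E4) : G η R2 (F η R2 z) = z := by
  by_cases h0 : gC η R2 (uu z) (ms η z) = 0
  · obtain ⟨hu, hm⟩ := gC_eq_zero hη hR (uu_nonneg z) h0.le
    obtain ⟨h30, h31, h33⟩ := coords_of_uu_zero hu
    have hwz : ww z = 0 := by unfold ww; rw [h30, h31, h33]; ring
    have hz2 : z 2 = η / 2 := by unfold ms at hm; rw [hwz] at hm; linarith
    have hlam : lam η R2 z = 0 := by unfold lam; rw [h0, div_zero]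
    have hF : F η R2 z = mk4 0 0 (η/2) 0 := by
      ext i; fin_cases i
      · show F η R2 z 0 = 0; rw [F_apply0, h30, mul_zero]
      · show F η R2 z 1 = 0; rw [F_apply1, h31, mul_zero]
      · show F η R2 z 2 = η/2; rw [F_apply2, hlam, zero_mul, add_zero]
      · show F η R2 z 3 = 0; rw [F_apply3, h33, mul_zero]
    rw [hF]
    have huP : uu (mk4 0 0 (η/2) 0) = 0 := by unfold uu; show (0:ℝ)^2 + 0^2 + 0^2 = 0; ring
    have hwP : ww (mk4 0 0 (η/2) 0) = 0 := by unfold ww; show (0:ℝ)^2 - 0^2 - 0^2 = 0; ring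
    have hMP : Mt η (mk4 0 0 (η/2) 0) = 0 := by unfold Mt; show η/2 - η/2 = 0; ring
    have hmu : mu η R2 (mk4 0 0 (η/2) 0) = 0 := by
      unfold mu; rw [huP, hwP, hMP, gK_zero_zero, div_zero]
    ext i; fin_cases i
    · show G η R2 _ 0 = z 0; rw [G_apply0, hmu]; rw [h30]; simp
    · show G η R2 _ 1 = z 1; rw [G_apply1, hmu]; rw [h31]; simp
    · show G η R2 _ 2 = z 2
      rw [G_apply2, hmu, hMP, hwP, hz2]; ring
    · show G η R2 _ 3 = z 3; rw [G_apply3, hmu]; rw [h33]; simp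
  · have hCne : gC η R2 (uu z) (ms η z) ≠ 0 := h0
    have hgC : 0 < gC η R2 (uu z) (ms η z) := (gC_nonneg hη _ _).lt_of_ne (Ne.symm h0)
    have hgK : 0 < gK η R2 (uu z) (ww z) (ms η z) := by
      rcases eq_or_lt_of_le (gK_nonneg hη (uu z) (ww z) (ms η z)) with h | h
      · exfalso
        obtain ⟨hu, hw, hm⟩ := gK_eq_zero hη hR (uu_nonneg z) h.ge
        exact h0 (by rw [hu, hm]; exact gC_zero_zero)
      · exact h
    have hKne : gK η R2 (uu z) (ww z) (ms η z) ≠ 0 := ne_of_gt hgK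
    have hlpos : 0 < lam η R2 z := div_pos hgK hgC
    have h1 : uu (F η R2 z) = lam η R2 z * uu z := uu_F hη z
    have h2 : ww (F η R2 z) = lam η R2 z * ww z := ww_F hη z
    have h3 : Mt η (F η R2 z) = lam η R2 z * ms η z := Mt_F z
    have hmu : mu η R2 (F η R2 z) * lam η R2 z = 1 := by
      unfold mu
      rw [h1, h2, h3, gC_smul _ _ (le_of_lt hlpos), gK_smul _ _ _ (le_of_lt hlpos)]
      unfold lam
      field_simp
    have hsq : √(mu η R2 (F η R2 z)) * √(lam η R2 z) = 1 := by
      rw [← Real.sqrt_mul (mu_nonneg hη _), hmu, Real.sqrt_one]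
    ext i; fin_cases i
    · show G η R2 (F η R2 z) 0 = z 0
      rw [G_apply0, F_apply0, ← mul_assoc, hsq, one_mul]
    · show G η R2 (F η R2 z) 1 = z 1
      rw [G_apply1, F_apply1, ← mul_assoc, hsq, one_mul]
    · show G η R2 (F η R2 z) 2 = z 2
      rw [G_apply2, h3, h2]
      calc η/2 + mu η R2 (F η R2 z) * (lam η R2 z * ms η z)
            + mu η R2 (F η R2 z) * (lam η R2 z * ww z)
          = η/2 + (mu η R2 (F η R2 z) * lam η R2 z) * ms η z
            + (mu η R2 (F η R2 z) * lam η R2 z) * ww z := by ring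
        _ = η/2 + ms η z + ww z := by rw [hmu]; ring
        _ = z 2 := by unfold ms; ring
    · show G η R2 (F η R2 z) 3 = z 3
      rw [G_apply3, F_apply3, ← mul_assoc, hsq, one_mul]

lemma F_G (hη : 0 < η) (hR : 0 < R2) (z : E4) : F η R2 (G η R2 z) = z := by
  by_cases h0 : gK η R2 (uu z) (ww z) (Mt η z) = 0
  · obtain ⟨hu, hw, hm⟩ := gK_eq_zero hη hR (uu_nonneg z) h0.le
    obtain ⟨h30, h31, h33⟩ := coords_of_uu_zero hu
    have hz2 : z 2 = η / 2 := by unfold Mt at hm; linarith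
    have hmu : mu η R2 z = 0 := by unfold mu; rw [h0, div_zero]
    have hG : G η R2 z = mk4 0 0 (η/2) 0 := by
      ext i; fin_cases i
      · show G η R2 z 0 = 0; rw [G_apply0, h30, mul_zero]
      · show G η R2 z 1 = 0; rw [G_apply1, h31, mul_zero]
      · show G η R2 z 2 = η/2; rw [G_apply2, hmu]; ring
      · show G η R2 z 3 = 0; rw [G_apply3, h33, mul_zero]
    rw [hG]
    have huP : uu (mk4 0 0 (η/2) 0) = 0 := by unfold uu; show (0:ℝ)^2 + 0^2 + 0^2 = 0; ring
    have hwP : ww (mk4 0 0 (η/2) 0) = 0 := by unfold ww; show (0:ℝ)^2 - 0^2 - 0^2 = 0; ring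
    have hmP : ms η (mk4 0 0 (η/2) 0) = 0 := by
      unfold ms; rw [hwP]; show η/2 - 0 - η/2 = 0; ring
    have hlam : lam η R2 (mk4 0 0 (η/2) 0) = 0 := by
      unfold lam; rw [huP, hmP, gC_zero_zero, div_zero]
    ext i; fin_cases i
    · show F η R2 _ 0 = z 0; rw [F_apply0, hlam]; rw [h30]; simp
    · show F η R2 _ 1 = z 1; rw [F_apply1, hlam]; rw [h31]; simp
    · show F η R2 _ 2 = z 2; rw [F_apply2, hlam, hz2]; ring
    · show F η R2 _ 3 = z 3; rw [F_apply3, hlam]; rw [h33]; simp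
  · have hgK : 0 < gK η R2 (uu z) (ww z) (Mt η z) := (gK_nonneg hη _ _ _).lt_of_ne (Ne.symm h0)
    have hgC : 0 < gC η R2 (uu z) (Mt η z) := by
      rcases eq_or_lt_of_le (gC_nonneg hη (uu z) (Mt η z)) with h | h
      · exfalso
        obtain ⟨hu, hm⟩ := gC_eq_zero hη hR (uu_nonneg z) h.ge
        have hwz : ww z = 0 := by
          have := abs_ww_le z
          rw [hu] at this
          exact abs_eq_zero.mp (le_antisymm this (abs_nonneg _))
        exact h0 (by rw [hu, hwz, hm]; exact gK_zero_zero)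
      · exact h
    have hCne : gC η R2 (uu z) (Mt η z) ≠ 0 := ne_of_gt hgC
    have hKne : gK η R2 (uu z) (ww z) (Mt η z) ≠ 0 := h0
    have hmpos : 0 < mu η R2 z := div_pos hgC hgK
    have h1 : uu (G η R2 z) = mu η R2 z * uu z := uu_G hη z
    have h2 : ww (G η R2 z) = mu η R2 z * ww z := ww_G hη z
    have h3 : ms η (G η R2 z) = mu η R2 z * Mt η z := ms_G hη z
    have hlam : lam η R2 (G η R2 z) * mu η R2 z = 1 := by
      unfold lam
      rw [h1, h2, h3, gC_smul _ _ (le_of_lt hmpos), gK_smul _ _ _ (le_of_lt hmpos)]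
      unfold mu
      field_simp
    have hsq : √(lam η R2 (G η R2 z)) * √(mu η R2 z) = 1 := by
      rw [← Real.sqrt_mul (lam_nonneg hη _), hlam, Real.sqrt_one]
    ext i; fin_cases i
    · show F η R2 (G η R2 z) 0 = z 0
      rw [F_apply0, G_apply0, ← mul_assoc, hsq, one_mul]
    · show F η R2 (G η R2 z) 1 = z 1
      rw [F_apply1, G_apply1, ← mul_assoc, hsq, one_mul]
    · show F η R2 (G η R2 z) 2 = z 2
      rw [F_apply2, h3]
      calc η/2 + lam η R2 (G η R2 z) * (mu η R2 z * Mt η z)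
          = η/2 + (lam η R2 (G η R2 z) * mu η R2 z) * Mt η z := by ring
        _ = η/2 + Mt η z := by rw [hlam]; ring
        _ = z 2 := by unfold Mt; ring
    · show F η R2 (G η R2 z) 3 = z 3
      rw [F_apply3, G_apply3, ← mul_assoc, hsq, one_mul]

end Inverse

section Mem

variable {η R2 : ℝ}

lemma mul_two_div_le_one (hη : 0 < η) {A : ℝ} : A * (2/η) ≤ 1 ↔ A ≤ η/2 := by
  rw [show A * (2/η) = A*2/η by ring, div_le_one hη]
  constructor <;> intro <;> linarith

lemma mem_iff_gK (hη : 0 < η) (hR : 0 < R2) (z : E4) :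
    (-η ≤ ww z ∧ ww z ≤ z 2 ∧ z 2 ≤ η ∧ uu z ≤ R2) ↔
      gK η R2 (uu z) (ww z) (ms η z) ≤ 1 := by
  unfold gK
  rw [max_le_iff, max_le_iff, max_le_iff, div_le_one hR, div_le_one hη,
    mul_two_div_le_one hη, mul_two_div_le_one hη]
  unfold ms
  constructor
  · rintro ⟨a, b, c, d⟩
    exact ⟨⟨d, by linarith⟩, by linarith, by linarith⟩
  · rintro ⟨⟨d, a⟩, c, b⟩
    exact ⟨by linarith, by linarith, by linarith, d⟩

lemma memC_iff_gC (hη : 0 < η) (hR : 0 < R2) (z : E4) :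
    (uu z ≤ R2 ∧ 0 ≤ z 2 ∧ z 2 ≤ η) ↔ gC η R2 (uu z) (Mt η z) ≤ 1 := by
  unfold gC Mt
  rw [max_le_iff, div_le_one hR, mul_two_div_le_one hη, abs_le]
  constructor
  · rintro ⟨a, b, c⟩
    exact ⟨a, by constructor <;> linarith⟩
  · rintro ⟨a, b, c⟩
    exact ⟨a, by linarith, by linarith⟩

lemma ww_of_uu_zero {z : E4} (h : uu z = 0) : ww z = 0 := by
  have h2 := abs_ww_le z
  rw [h] at h2
  exact abs_eq_zero.mp (le_antisymm h2 (abs_nonneg _))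

lemma mem_F_iff (hη : 0 < η) (hR : 0 < R2) (z : E4) :
    gK η R2 (uu z) (ww z) (ms η z) ≤ 1 ↔
      gC η R2 (uu (F η R2 z)) (Mt η (F η R2 z)) ≤ 1 := by
  by_cases h0 : gC η R2 (uu z) (ms η z) = 0
  · obtain ⟨hu, hm⟩ := gC_eq_zero hη hR (uu_nonneg z) h0.le
    have hwz : ww z = 0 := ww_of_uu_zero hu
    have l : gK η R2 (uu z) (ww z) (ms η z) = 0 := by rw [hu, hwz, hm]; exact gK_zero_zero
    have r : gC η R2 (uu (F η R2 z)) (Mt η (F η R2 z)) = 0 := by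
      rw [uu_F hη, Mt_F, hu, hm, mul_zero]; exact gC_zero_zero
    rw [l, r]
  · rw [uu_F hη, Mt_F, gC_smul _ _ (lam_nonneg hη z)]
    unfold lam
    rw [div_mul_cancel₀ _ h0]

end Mem

section Cont

variable {η R2 : ℝ}

lemma cont_uu : Continuous uu :=
  (((PiLp.continuous_apply 2 _ (0 : Fin 4)).pow 2).add ((PiLp.continuous_apply 2 _ (1 : Fin 4)).pow 2)).add
    ((PiLp.continuous_apply 2 _ (3 : Fin 4)).pow 2)

lemma cont_ww : Continuous ww :=
  (((PiLp.continuous_apply 2 _ (0 : Fin 4)).pow 2).sub ((PiLp.continuous_apply 2 _ (1 : Fin 4)).pow 2)).sub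
    ((PiLp.continuous_apply 2 _ (3 : Fin 4)).pow 2)

lemma cont_ms : Continuous (ms η) :=
  ((PiLp.continuous_apply 2 _ 2 : Continuous fun z : E4 => z 2).sub cont_ww).sub continuous_const

lemma cont_gKz : Continuous fun z : E4 => gK η R2 (uu z) (ww z) (ms η z) := by
  unfold gK
  exact ((cont_uu.div_const R2).max (cont_ww.neg.div_const η)).max
    (((cont_ww.add cont_ms).mul continuous_const).max ((cont_ms.neg).mul continuous_const))

lemma cont_gCz : Continuous fun z : E4 => gC η R2 (uu z) (ms η z) := by
  unfold gC
  exact (cont_uu.div_const R2).max (cont_ms.abs.mul continuous_const)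

lemma cont_F (hη : 0 < η) (hR : 0 < R2) : Continuous (F η R2) := by
  rw [continuous_iff_continuousAt]
  intro z₀
  by_cases h0 : gC η R2 (uu z₀) (ms η z₀) = 0
  · obtain ⟨hu, hm⟩ := gC_eq_zero hη hR (uu_nonneg z₀) h0.le
    obtain ⟨h30, h31, h33⟩ := coords_of_uu_zero hu
    have hC0 : (0:ℝ) < 2*R2/η + 1 := by positivity
    have hsqb : ∀ z : E4, √(lam η R2 z) ≤ √(2*R2/η + 1) :=
      fun z => Real.sqrt_le_sqrt (lam_le hη hR z)
    have habs : ∀ (z : E4) (j : Fin 4),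
        ‖√(lam η R2 z) * z j‖ ≤ √(2*R2/η + 1) * |z j| := by
      intro z j
      rw [Real.norm_eq_abs, abs_mul, abs_of_nonneg (Real.sqrt_nonneg _)]
      exact mul_le_mul_of_nonneg_right (hsqb z) (abs_nonneg _)
    have key : ∀ j : Fin 4, z₀ j = 0 →
        Filter.Tendsto (fun z : E4 => √(lam η R2 z) * z j) (nhds z₀) (nhds 0) := by
      intro j hj
      apply squeeze_zero_norm (fun z => habs z j)
      have : Filter.Tendsto (fun z : E4 => √(2*R2/η + 1) * |z j|) (nhds z₀)
          (nhds (√(2*R2/η + 1) * |z₀ j|)) :=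
        (continuous_const.mul ((PiLp.continuous_apply 2 _ j).abs)).tendsto z₀
      rwa [hj, abs_zero, mul_zero] at this
    apply (PiLp.continuous_toLp 2 (fun _ : Fin 4 => ℝ)).continuousAt.comp
      (f := fun z => (F η R2 z).ofLp) (x := z₀)
    apply continuousAt_pi.mpr
    intro i
    fin_cases i
    · show ContinuousAt (fun z : E4 => √(lam η R2 z) * z 0) z₀
      unfold ContinuousAt
      rw [show (fun z : E4 => √(lam η R2 z) * z 0) z₀ = 0 from by
        show √(lam η R2 z₀) * z₀ 0 = 0
        rw [h30, mul_zero]]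
      exact key 0 h30
    · show ContinuousAt (fun z : E4 => √(lam η R2 z) * z 1) z₀
      unfold ContinuousAt
      rw [show (fun z : E4 => √(lam η R2 z) * z 1) z₀ = 0 from by
        show √(lam η R2 z₀) * z₀ 1 = 0
        rw [h31, mul_zero]]
      exact key 1 h31
    · show ContinuousAt (fun z : E4 => η/2 + lam η R2 z * ms η z) z₀
      unfold ContinuousAt
      rw [show (fun z : E4 => η/2 + lam η R2 z * ms η z) z₀ = η/2 + 0 from by
        show η/2 + lam η R2 z₀ * ms η z₀ = η/2 + 0
        rw [hm, mul_zero]]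
      apply Filter.Tendsto.const_add
      have hb : ∀ z : E4, ‖lam η R2 z * ms η z‖ ≤ (2*R2/η + 1) * |ms η z| := by
        intro z
        rw [Real.norm_eq_abs, abs_mul]
        apply mul_le_mul_of_nonneg_right _ (abs_nonneg _)
        rw [abs_of_nonneg (lam_nonneg hη z)]
        exact lam_le hη hR z
      have ht : Filter.Tendsto (fun z : E4 => (2*R2/η + 1) * |ms η z|) (nhds z₀)
          (nhds 0) := by
        have h2 : Filter.Tendsto (fun z : E4 => (2*R2/η + 1) * |ms η z|) (nhds z₀)
            (nhds ((2*R2/η + 1) * |ms η z₀|)) :=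
          (continuous_const.mul cont_ms.abs).tendsto z₀
        rwa [hm, abs_zero, mul_zero] at h2
      exact squeeze_zero_norm hb ht
    · show ContinuousAt (fun z : E4 => √(lam η R2 z) * z 3) z₀
      unfold ContinuousAt
      rw [show (fun z : E4 => √(lam η R2 z) * z 3) z₀ = 0 from by
        show √(lam η R2 z₀) * z₀ 3 = 0
        rw [h33, mul_zero]]
      exact key 3 h33
  · have hlam : ContinuousAt (lam η R2) z₀ := by
      unfold lam
      exact ContinuousAt.div cont_gKz.continuousAt cont_gCz.continuousAt h0
    have hsqrt : ContinuousAt (fun z => √(lam η R2 z)) z₀ :=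
      Real.continuous_sqrt.continuousAt.comp hlam
    apply (PiLp.continuous_toLp 2 (fun _ : Fin 4 => ℝ)).continuousAt.comp
      (f := fun z => (F η R2 z).ofLp) (x := z₀)
    apply continuousAt_pi.mpr
    intro i
    fin_cases i
    · exact hsqrt.mul (PiLp.continuous_apply 2 _ (0 : Fin 4)).continuousAt
    · exact hsqrt.mul (PiLp.continuous_apply 2 _ (1 : Fin 4)).continuousAt
    · exact (continuousAt_const.add (hlam.mul cont_ms.continuousAt))
    · exact hsqrt.mul (PiLp.continuous_apply 2 _ (3 : Fin 4)).continuousAt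

end Cont

section Sets

variable (η R2 : ℝ)

def N2set : Set E4 := {z | -η ≤ ww z ∧ ww z ≤ z 2 ∧ z 2 ≤ η ∧ uu z ≤ R2}

def Cyl : Set E4 := {z | uu z ≤ R2 ∧ 0 ≤ z 2 ∧ z 2 ≤ η}

variable {η R2}

lemma isClosed_N2 : IsClosed (N2set η R2) := by
  have h : N2set η R2 = {z : E4 | -η ≤ ww z} ∩ ({z : E4 | ww z ≤ z 2} ∩
      ({z : E4 | z 2 ≤ η} ∩ {z : E4 | uu z ≤ R2})) := rfl
  rw [h]
  exact (isClosed_le continuous_const cont_ww).inter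
    ((isClosed_le cont_ww (PiLp.continuous_apply 2 _ 2 : Continuous fun z : E4 => z 2)).inter
      ((isClosed_le (PiLp.continuous_apply 2 _ 2 : Continuous fun z : E4 => z 2) continuous_const).inter
        (isClosed_le cont_uu continuous_const)))

lemma isClosed_Cyl : IsClosed (Cyl η R2) := by
  have h : Cyl η R2 = {z : E4 | uu z ≤ R2} ∩ ({z : E4 | 0 ≤ z 2} ∩ {z : E4 | z 2 ≤ η}) := rfl
  rw [h]
  exact (isClosed_le cont_uu continuous_const).inter
    ((isClosed_le continuous_const (PiLp.continuous_apply 2 _ 2 : Continuous fun z : E4 => z 2)).inter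
      (isClosed_le (PiLp.continuous_apply 2 _ 2 : Continuous fun z : E4 => z 2) continuous_const))

lemma norm_sq_eq (z : E4) : ‖z‖ = √(z 0^2 + z 1^2 + z 2^2 + z 3^2) := by
  rw [EuclideanSpace.norm_eq]
  congr 1
  rw [Fin.sum_univ_four]
  simp [Real.norm_eq_abs, sq_abs]

lemma bounded_of_bounds {S : Set E4} (hη : 0 < η)
    (h : ∀ z ∈ S, uu z ≤ R2 ∧ z 2 ^ 2 ≤ η ^ 2) : Bornology.IsBounded S := by
  apply (Metric.isBounded_closedBall (x := (0:E4)) (r := √(R2 + η^2))).subset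
  intro z hz
  obtain ⟨h1, h2⟩ := h z hz
  rw [Metric.mem_closedBall, dist_zero_right, norm_sq_eq]
  apply Real.sqrt_le_sqrt
  unfold uu at h1
  linarith

lemma bounded_N2 (hη : 0 < η) : Bornology.IsBounded (N2set η R2) := by
  apply bounded_of_bounds hη
  rintro z ⟨h1, h2, h3, h4⟩
  exact ⟨h4, sq_le_sq' (by linarith) h3⟩

lemma bounded_Cyl (hη : 0 < η) : Bornology.IsBounded (Cyl η R2) := by
  apply bounded_of_bounds hη
  rintro z ⟨h1, h2, h3⟩
  exact ⟨h1, sq_le_sq' (by linarith) h3⟩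

lemma convex_Cyl : Convex ℝ (Cyl η R2) := by
  rintro x ⟨hx1, hx2, hx3⟩ y ⟨hy1, hy2, hy3⟩ a b ha hb hab
  have e : ∀ i : Fin 4, (a • x + b • y) i = a * x i + b * y i := by
    intro i
    simp [PiLp.add_apply, PiLp.smul_apply, smul_eq_mul]
  have hb' : b = 1 - a := by linarith
  subst hb'
  refine ⟨?_, ?_, ?_⟩
  · show uu (a • x + (1-a) • y) ≤ R2
    unfold uu
    rw [e 0, e 1, e 3]
    unfold uu at hx1 hy1
    nlinarith [mul_nonneg (mul_nonneg ha hb) (sq_nonneg (x 0 - y 0)),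
      mul_nonneg (mul_nonneg ha hb) (sq_nonneg (x 1 - y 1)),
      mul_nonneg (mul_nonneg ha hb) (sq_nonneg (x 3 - y 3)),
      mul_le_mul_of_nonneg_left hx1 ha, mul_le_mul_of_nonneg_left hy1 hb]
  · show 0 ≤ (a • x + (1-a) • y) 2
    rw [e 2]
    have := mul_nonneg ha hx2
    have := mul_nonneg hb hy2
    linarith
  · show (a • x + (1-a) • y) 2 ≤ η
    rw [e 2]
    nlinarith [mul_le_mul_of_nonneg_left hx3 ha, mul_le_mul_of_nonneg_left hy3 hb]

lemma coord_le_dist (x y : E4) (i : Fin 4) : |x i - y i| ≤ dist x y := by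
  rw [EuclideanSpace.dist_eq, ← Real.sqrt_sq_eq_abs]
  apply Real.sqrt_le_sqrt
  have h : dist (x i) (y i) ^ 2 = (x i - y i)^2 := by rw [Real.dist_eq, sq_abs]
  rw [← h]
  exact Finset.single_le_sum (f := fun j => dist (x j) (y j) ^ 2)
    (fun j _ => sq_nonneg _) (Finset.mem_univ i)

lemma interior_Cyl (hη : 0 < η) (hR : 0 < R2) : (interior (Cyl η R2)).Nonempty := by
  set c : E4 := mk4 0 0 (η/2) 0 with hc
  set ε : ℝ := min (√(R2/3)) (η/2) with he
  have hε : 0 < ε := lt_min (Real.sqrt_pos.mpr (by positivity)) (by positivity)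
  have hε1 : ε ^ 2 ≤ R2/3 := by
    have h1 : ε ≤ √(R2/3) := min_le_left _ _
    nlinarith [Real.sq_sqrt (show (0:ℝ) ≤ R2/3 by positivity), hε.le,
      Real.sqrt_nonneg (R2/3)]
  have hε2 : ε ≤ η/2 := min_le_right _ _
  refine ⟨c, mem_interior.mpr ⟨Metric.ball c ε, ?_, Metric.isOpen_ball, Metric.mem_ball_self hε⟩⟩
  intro z hz
  rw [Metric.mem_ball] at hz
  have hd0 : |z 0 - 0| ≤ dist z c := by
    have := coord_le_dist z c 0
    simpa [hc, mk4] using this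
  have hd1 : |z 1 - 0| ≤ dist z c := by
    have := coord_le_dist z c 1
    simpa [hc, mk4] using this
  have hd3 : |z 3 - 0| ≤ dist z c := by
    have := coord_le_dist z c 3
    simpa [hc, mk4] using this
  have hd2 : |z 2 - η/2| ≤ dist z c := by
    have := coord_le_dist z c 2
    simpa [hc, mk4] using this
  have b0 : (z 0)^2 ≤ ε^2 := by
    rw [← sq_abs]
    apply pow_le_pow_left₀ (abs_nonneg _) _ 2
    calc |z 0| = |z 0 - 0| := by rw [sub_zero]
    _ ≤ dist z c := hd0
    _ ≤ ε := le_of_lt hz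
  have b1 : (z 1)^2 ≤ ε^2 := by
    rw [← sq_abs]
    apply pow_le_pow_left₀ (abs_nonneg _) _ 2
    calc |z 1| = |z 1 - 0| := by rw [sub_zero]
    _ ≤ dist z c := hd1
    _ ≤ ε := le_of_lt hz
  have b3 : (z 3)^2 ≤ ε^2 := by
    rw [← sq_abs]
    apply pow_le_pow_left₀ (abs_nonneg _) _ 2
    calc |z 3| = |z 3 - 0| := by rw [sub_zero]
    _ ≤ dist z c := hd3
    _ ≤ ε := le_of_lt hz
  have b2 : |z 2 - η/2| ≤ η/2 := le_trans hd2 (le_trans (le_of_lt hz) hε2)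
  rw [abs_le] at b2
  refine ⟨?_, by linarith [b2.1], by linarith [b2.2]⟩
  show uu z ≤ R2
  unfold uu
  linarith

end Sets

end N2B

open N2B in
theorem N2_is_four_ball
    (η R : ℝ) (hη : 0 < η) (hηR : η < R ^ 2) :
    Nonempty
      (({p : EuclideanSpace ℝ (Fin 4) |
            -η ≤ p 0 ^ 2 - p 1 ^ 2 - p 3 ^ 2 ∧
            p 0 ^ 2 - p 1 ^ 2 - p 3 ^ 2 ≤ p 2 ∧
            p 2 ≤ η ∧
            p 0 ^ 2 + p 1 ^ 2 + p 3 ^ 2 ≤ R ^ 2} : Set (EuclideanSpace ℝ (Fin 4))) ≃ₜ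
        (Metric.closedBall (0 : EuclideanSpace ℝ (Fin 4)) 1 :
          Set (EuclideanSpace ℝ (Fin 4)))) := by
  have hR : 0 < R ^ 2 := hη.trans hηR
  let eqv : E4 ≃ E4 := ⟨F η (R^2), G η (R^2), G_F hη hR, F_G hη hR⟩
  have hmem : ∀ z : E4, z ∈ N2set η (R^2) ↔ eqv z ∈ Cyl η (R^2) := by
    intro z
    have h1 := mem_iff_gK hη hR z
    have h2 := memC_iff_gC hη hR (F η (R^2) z)
    have h3 := mem_F_iff hη hR z
    constructor
    · intro h
      exact h2.mpr (h3.mp (h1.mp h))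
    · intro h
      exact h1.mpr (h3.mpr (h2.mp h))
  haveI : CompactSpace (N2set η (R^2)) :=
    isCompact_iff_compactSpace.mp
      (Metric.isCompact_of_isClosed_isBounded isClosed_N2 (bounded_N2 hη))
  have hce : Continuous fun x : N2set η (R^2) =>
      (⟨eqv x.1, (hmem x.1).mp x.2⟩ : Cyl η (R^2)) :=
    Continuous.subtype_mk ((cont_F hη hR).comp continuous_subtype_val) _
  let homeo1 : N2set η (R^2) ≃ₜ Cyl η (R^2) :=
    Continuous.homeoOfEquivCompactToT2 (f := eqv.subtypeEquiv hmem) hce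
  obtain ⟨h, -, hcl, -⟩ :=
    exists_homeomorph_image_interior_closure_frontier_eq_unitBall
      (convex_Cyl (η := η) (R2 := R^2)) (interior_Cyl hη hR) (bounded_Cyl hη)
  rw [isClosed_Cyl.closure_eq] at hcl
  have hsetN : ({p : EuclideanSpace ℝ (Fin 4) |
            -η ≤ p 0 ^ 2 - p 1 ^ 2 - p 3 ^ 2 ∧
            p 0 ^ 2 - p 1 ^ 2 - p 3 ^ 2 ≤ p 2 ∧
            p 2 ≤ η ∧
            p 0 ^ 2 + p 1 ^ 2 + p 3 ^ 2 ≤ R ^ 2} : Set (EuclideanSpace ℝ (Fin 4)))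
      = N2set η (R^2) := rfl
  exact ⟨(Homeomorph.setCongr hsetN).trans (homeo1.trans
    ((h.image (Cyl η (R^2))).trans (Homeomorph.setCongr hcl)))⟩
end
end

section
/- Let η > 0 and R > 0 be real numbers. Then the subset N₃ = {(x,y,r,v) ∈ ℝ⁴ : y² + v² = x² + η, |x| ≤ R, |r| ≤ η} of ℝ⁴ is homeomorphic to the product of the circle S¹ and the closed unit disk in ℝ². (The attaching region N₃ of the piece N₂ is a solid torus S¹ × D², so N₂ is attached as a 2-handle.) -/
open Complex Metric Set

noncomputable section SolidTorus

/-- The rectangle in the plane. -/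
def rectSet (η R : ℝ) : Set (EuclideanSpace ℝ (Fin 2)) :=
  {q | |q 0| ≤ R ∧ |q 1| ≤ η}

lemma sqrt_pos_aux {η : ℝ} (hη : 0 < η) (x : ℝ) : 0 < Real.sqrt (x ^ 2 + η) :=
  Real.sqrt_pos.2 (by positivity)

lemma sq_sqrt_aux {η : ℝ} (hη : 0 < η) (x : ℝ) :
    Real.sqrt (x ^ 2 + η) ^ 2 = x ^ 2 + η :=
  Real.sq_sqrt (by positivity)

/-- Step 1: the attaching region is homeomorphic to `Circle × rectangle`. -/
noncomputable def torusEquiv (η R : ℝ) (hη : 0 < η) :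
    ({p : EuclideanSpace ℝ (Fin 4) |
        p 1 ^ 2 + p 3 ^ 2 = p 0 ^ 2 + η ∧ |p 0| ≤ R ∧ |p 2| ≤ η} :
      Set (EuclideanSpace ℝ (Fin 4))) ≃ₜ Circle × (rectSet η R) where
  toFun p :=
    (⟨(p.1 1 + p.1 3 * I) / Real.sqrt ((p.1 0) ^ 2 + η), by
        have h := p.2.1
        have hs := sqrt_pos_aux hη (p.1 0)
        show _ ∈ Metric.sphere (0:ℂ) 1
        rw [mem_sphere_zero_iff_norm]
        rw [norm_div, Complex.norm_add_mul_I, Complex.norm_real, Real.norm_eq_abs,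
          abs_of_pos hs, h, div_self hs.ne']⟩,
     ⟨(EuclideanSpace.equiv (Fin 2) ℝ).symm ![p.1 0, p.1 2], by
        constructor
        · exact p.2.2.1
        · exact p.2.2.2⟩)
  invFun zq :=
    ⟨(EuclideanSpace.equiv (Fin 4) ℝ).symm
        ![zq.2.1 0, Real.sqrt ((zq.2.1 0) ^ 2 + η) * (zq.1 : ℂ).re, zq.2.1 1,
          Real.sqrt ((zq.2.1 0) ^ 2 + η) * (zq.1 : ℂ).im], by
      obtain ⟨z, q, hq⟩ := zq
      have hz : (z : ℂ).re ^ 2 + (z : ℂ).im ^ 2 = 1 := by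
        have := Circle.normSq_coe z
        rwa [Complex.normSq_apply, ← pow_two, ← pow_two] at this
      refine ⟨?_, hq.1, hq.2⟩
      show (Real.sqrt ((q 0) ^ 2 + η) * (z : ℂ).re) ^ 2
          + (Real.sqrt ((q 0) ^ 2 + η) * (z : ℂ).im) ^ 2 = (q 0) ^ 2 + η
      have := sq_sqrt_aux hη (q 0)
      nlinarith⟩
  left_inv p := by
    obtain ⟨p, hp⟩ := p
    ext i
    have hs := sqrt_pos_aux hη (p 0)
    have hre : (((p 1 : ℂ) + p 3 * I) / ((((p 0) ^ 2 + η : ℝ).sqrt : ℝ) : ℂ)).re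
        = p 1 / ((p 0) ^ 2 + η).sqrt := by
      rw [Complex.div_ofReal_re, Complex.add_re, Complex.ofReal_re, Complex.mul_re,
        Complex.I_re, Complex.I_im, Complex.ofReal_im]
      ring_nf
    have him : (((p 1 : ℂ) + p 3 * I) / ((((p 0) ^ 2 + η : ℝ).sqrt : ℝ) : ℂ)).im
        = p 3 / ((p 0) ^ 2 + η).sqrt := by
      rw [Complex.div_ofReal_im, Complex.add_im, Complex.ofReal_im, Complex.mul_im,
        Complex.I_re, Complex.I_im, Complex.ofReal_im, Complex.ofReal_re]
      ring_nf
    fin_cases i <;>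
      simp only [EuclideanSpace.equiv, Equiv.coe_fn_symm_mk] <;>
      show _ = _
    · rfl
    · show ((p 0)^2+η).sqrt * _ = p 1
      rw [hre, mul_div_cancel₀ _ hs.ne']
    · rfl
    · show ((p 0)^2+η).sqrt * _ = p 3
      rw [him, mul_div_cancel₀ _ hs.ne']
  right_inv zq := by
    obtain ⟨z, q, hq⟩ := zq
    have hs := sqrt_pos_aux hη (q 0)
    refine Prod.ext (Circle.ext ?_) (Subtype.ext ?_)
    · show ((↑(Real.sqrt ((q 0) ^ 2 + η) * (z : ℂ).re) : ℂ)
          + (↑(Real.sqrt ((q 0) ^ 2 + η) * (z : ℂ).im) : ℂ) * I)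
          / ((Real.sqrt ((q 0) ^ 2 + η) : ℝ) : ℂ) = (z : ℂ)
      have hne : ((Real.sqrt ((q 0) ^ 2 + η) : ℝ) : ℂ) ≠ 0 := by
        exact_mod_cast hs.ne'
      have hz' : (z : ℂ) = (z : ℂ).re + (z : ℂ).im * I := (Complex.re_add_im _).symm
      push_cast
      rw [div_eq_iff hne]
      conv_rhs => rw [hz']
      ring
    · ext i
      fin_cases i <;> rfl
  continuous_toFun := by
    have hc : ∀ i, Continuous fun p : ({p : EuclideanSpace ℝ (Fin 4) |
        p 1 ^ 2 + p 3 ^ 2 = p 0 ^ 2 + η ∧ |p 0| ≤ R ∧ |p 2| ≤ η} :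
          Set (EuclideanSpace ℝ (Fin 4))) => (p.1 : EuclideanSpace ℝ (Fin 4)) i :=
      fun i => (EuclideanSpace.proj i).continuous.comp continuous_subtype_val
    refine Continuous.prodMk ?_ ?_
    · refine Continuous.subtype_mk ?_ _
      refine Continuous.div ?_ ?_ ?_
      · exact (Complex.continuous_ofReal.comp (hc 1)).add
          ((Complex.continuous_ofReal.comp (hc 3)).mul continuous_const)
      · exact Complex.continuous_ofReal.comp
          (Real.continuous_sqrt.comp (((hc 0).pow 2).add continuous_const))
      · intro p
        exact_mod_cast (sqrt_pos_aux hη (p.1 0)).ne'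
    · refine Continuous.subtype_mk ?_ _
      refine ((EuclideanSpace.equiv (Fin 2) ℝ).symm.continuous).comp ?_
      refine continuous_pi fun i => ?_
      fin_cases i
      · exact hc 0
      · exact hc 2
  continuous_invFun := by
    have hq : ∀ i, Continuous fun zq : Circle × (rectSet η R) =>
        (zq.2.1 : EuclideanSpace ℝ (Fin 2)) i :=
      fun i => (EuclideanSpace.proj i).continuous.comp
        (continuous_subtype_val.comp continuous_snd)
    have hz : Continuous fun zq : Circle × (rectSet η R) => (zq.1 : ℂ) :=
      continuous_subtype_val.comp continuous_fst
    have hsq : Continuous fun zq : Circle × (rectSet η R) =>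
        Real.sqrt ((zq.2.1 0) ^ 2 + η) :=
      Real.continuous_sqrt.comp (((hq 0).pow 2).add continuous_const)
    refine Continuous.subtype_mk ?_ _
    refine ((EuclideanSpace.equiv (Fin 4) ℝ).symm.continuous).comp ?_
    refine continuous_pi fun i => ?_
    fin_cases i
    · exact hq 0
    · exact hsq.mul (Complex.continuous_re.comp hz)
    · exact hq 1
    · exact hsq.mul (Complex.continuous_im.comp hz)

lemma rect_convex (η R : ℝ) : Convex ℝ (rectSet η R) := by
  intro a ha b hb s t hs ht hst
  constructor
  · show |s * a 0 + t * b 0| ≤ R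
    calc |s * a 0 + t * b 0| ≤ |s * a 0| + |t * b 0| := abs_add_le _ _
      _ = s * |a 0| + t * |b 0| := by
          rw [abs_mul, abs_mul, _root_.abs_of_nonneg hs, _root_.abs_of_nonneg ht]
      _ ≤ s * R + t * R := by
          have := ha.1; have := hb.1
          gcongr
      _ = R := by rw [← add_mul, hst, one_mul]
  · show |s * a 1 + t * b 1| ≤ η
    calc |s * a 1 + t * b 1| ≤ |s * a 1| + |t * b 1| := abs_add_le _ _
      _ = s * |a 1| + t * |b 1| := by
          rw [abs_mul, abs_mul, _root_.abs_of_nonneg hs, _root_.abs_of_nonneg ht]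
      _ ≤ s * η + t * η := by
          have := ha.2; have := hb.2
          gcongr
      _ = η := by rw [← add_mul, hst, one_mul]

lemma coord_le_norm (q : EuclideanSpace ℝ (Fin 2)) (i : Fin 2) : |q i| ≤ ‖q‖ := by
  rw [EuclideanSpace.norm_eq]
  have h1 : |q i| = Real.sqrt (‖q i‖ ^ 2) := by
    rw [Real.norm_eq_abs, _root_.sq_abs, Real.sqrt_sq_eq_abs]
  rw [h1]
  apply Real.sqrt_le_sqrt
  exact Finset.single_le_sum (f := fun j => ‖q j‖ ^ 2)
    (fun j _ => by positivity) (Finset.mem_univ i)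

lemma rect_interior_nonempty (η R : ℝ) (hη : 0 < η) (hR : 0 < R) :
    (interior (rectSet η R)).Nonempty := by
  refine ⟨0, ?_⟩
  rw [mem_interior]
  refine ⟨Metric.ball 0 (min R η), ?_, Metric.isOpen_ball, ?_⟩
  · intro q hq
    rw [Metric.mem_ball, dist_zero_right] at hq
    constructor
    · exact (coord_le_norm q 0).trans (hq.le.trans (min_le_left _ _))
    · exact (coord_le_norm q 1).trans (hq.le.trans (min_le_right _ _))
  · exact Metric.mem_ball_self (lt_min hR hη)

lemma rect_bounded (η R : ℝ) (hη : 0 < η) (hR : 0 < R) :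
    Bornology.IsBounded (rectSet η R) := by
  refine (Metric.isBounded_closedBall (x := (0 : EuclideanSpace ℝ (Fin 2)))
    (r := R + η)).subset ?_
  intro q hq
  rw [Metric.mem_closedBall, dist_zero_right, EuclideanSpace.norm_eq]
  have h0 := hq.1; have h1 := hq.2
  have hRη : (0:ℝ) ≤ R + η := by positivity
  rw [show R + η = Real.sqrt ((R + η) ^ 2) from (Real.sqrt_sq hRη).symm]
  apply Real.sqrt_le_sqrt
  rw [Fin.sum_univ_two]
  have := abs_nonneg (q 0)
  have := abs_nonneg (q 1)
  simp only [Real.norm_eq_abs, sq_abs]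
  nlinarith [_root_.sq_abs (q 0), _root_.sq_abs (q 1)]

lemma rect_closed (η R : ℝ) : IsClosed (rectSet η R) := by
  have h0 : IsClosed {q : EuclideanSpace ℝ (Fin 2) | |q 0| ≤ R} :=
    isClosed_le (continuous_abs.comp (EuclideanSpace.proj (0 : Fin 2)).continuous)
      continuous_const
  have h1 : IsClosed {q : EuclideanSpace ℝ (Fin 2) | |q 1| ≤ η} :=
    isClosed_le (continuous_abs.comp (EuclideanSpace.proj (1 : Fin 2)).continuous)
      continuous_const
  exact h0.inter h1

/-- Step 2: the rectangle is homeomorphic to the closed unit disk. -/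
lemma rect_homeo_disk (η R : ℝ) (hη : 0 < η) (hR : 0 < R) :
    Nonempty ((rectSet η R) ≃ₜ (Metric.closedBall (0 : EuclideanSpace ℝ (Fin 2)) 1 :
      Set (EuclideanSpace ℝ (Fin 2)))) := by
  obtain ⟨h, -, hcl, -⟩ := exists_homeomorph_image_interior_closure_frontier_eq_unitBall
    (rect_convex η R) (rect_interior_nonempty η R hη hR) (rect_bounded η R hη hR)
  rw [(rect_closed η R).closure_eq] at hcl
  exact ⟨(h.image (rectSet η R)).trans (Homeomorph.setCongr hcl)⟩

end SolidTorus

theorem attaching_region_is_solid_torus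
    (η R : ℝ) (hη : 0 < η) (hR : 0 < R) :
    Nonempty
      (({p : EuclideanSpace ℝ (Fin 4) |
            p 1 ^ 2 + p 3 ^ 2 = p 0 ^ 2 + η ∧
            |p 0| ≤ R ∧ |p 2| ≤ η} : Set (EuclideanSpace ℝ (Fin 4))) ≃ₜ
        Circle × (Metric.closedBall (0 : EuclideanSpace ℝ (Fin 2)) 1 :
          Set (EuclideanSpace ℝ (Fin 2)))) := by
  obtain ⟨e⟩ := rect_homeo_disk η R hη hR
  exact ⟨(torusEquiv η R hη).trans ((Homeomorph.refl Circle).prodCongr e)⟩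
end

section
/- The complement of the plane curve {x² = y²}, that is, the subspace {(x,y) ∈ ℂ × ℂ : x² ≠ y²}, is homeomorphic to (S¹ × S¹) × (ℝ × ℝ). (This is the topological form of the paper's conclusion from the Kirby diagram for p = q = 2: the complement of {x² − y² = 0} is the interior of T² × D², i.e. T² × ℝ².) -/
open Set Metric

noncomputable def circleHomeo : Circle ≃ₜ ↥(sphere (0 : ℂ) 1) where
  toFun z := ⟨(z : ℂ), z.2⟩
  invFun z := ⟨(z : ℂ), z.2⟩
  left_inv z := rfl
  right_inv z := rfl
  continuous_toFun := by
    apply Continuous.subtype_mk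
    exact continuous_induced_dom
  continuous_invFun := by
    apply Continuous.subtype_mk
    exact continuous_induced_dom

noncomputable def ioiHomeo : (Ioi (0:ℝ)) ≃ₜ ℝ :=
  Real.expOrderIso.toHomeomorph.symm

lemma key_iff (x y : ℂ) : x ^ 2 ≠ y ^ 2 ↔ (x + y ≠ 0 ∧ x - y ≠ 0) := by
  constructor
  · intro h
    constructor <;> intro h0 <;> apply h
    · have : x = -y := by linear_combination h0
      rw [this]; ring
    · have : x = y := by linear_combination h0
      rw [this]
  · rintro ⟨h1, h2⟩ h
    have : (x + y) * (x - y) = 0 := by linear_combination h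
    rcases mul_eq_zero.1 this with h | h
    · exact h1 h
    · exact h2 h

noncomputable def splitHomeo :
    ({z : ℂ × ℂ | z.1 ^ 2 ≠ z.2 ^ 2} : Set (ℂ × ℂ)) ≃ₜ
      ({0}ᶜ : Set ℂ) × ({0}ᶜ : Set ℂ) where
  toFun z := (⟨z.1.1 + z.1.2, ((key_iff _ _).1 z.2).1⟩,
              ⟨z.1.1 - z.1.2, ((key_iff _ _).1 z.2).2⟩)
  invFun p := ⟨((p.1.1 + p.2.1) / 2, (p.1.1 - p.2.1) / 2), by
    apply (key_iff _ _).2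
    constructor
    · intro h; apply p.1.2; simpa using (by linear_combination h : (p.1 : ℂ) = 0)
    · intro h; apply p.2.2; simpa using (by linear_combination h : (p.2 : ℂ) = 0)⟩
  left_inv z := by
    ext <;> simp
  right_inv p := by
    ext <;> simp <;> ring
  continuous_toFun := by
    apply Continuous.prodMk <;> apply Continuous.subtype_mk <;> fun_prop
  continuous_invFun := by
    apply Continuous.subtype_mk
    apply Continuous.prodMk <;> fun_prop

theorem complement_of_two_lines_is_torus_times_plane :
    Nonempty
      (({z : ℂ × ℂ | z.1 ^ 2 ≠ z.2 ^ 2} : Set (ℂ × ℂ)) ≃ₜ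
        (Circle × Circle) × (ℝ × ℝ)) := by
  refine ⟨splitHomeo.trans ?_⟩
  have h : ({0}ᶜ : Set ℂ) ≃ₜ Circle × ℝ :=
    (homeomorphUnitSphereProd ℂ).trans
      ((circleHomeo.symm.prodCongr ioiHomeo))
  exact (h.prodCongr h).trans (Homeomorph.prodProdProdComm _ _ _ _)
end
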